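/- arXiv:1203.4188 — 2 statements merged into one kernel-verified Lean document; each statement's English description precedes it below -/
import Mathlib

section
/- Let r ≥ 3 and X ⊆ [2, n] with |X| ≤ r, X ⊄ [2, r+1], and suppose either |X| ≥ 4, or |X| = 3 with {2,3} ⊄ X, or |X| = 2 with 2 ∉ X and 3 ∉ X, or |X| = 1. Then for all sufficiently large n (depending on r and X ∩ [2,2r]), X is good: every left-compressed intersecting family 𝒜 ⊆ [n]^(r) satisfies |𝒜(X)| ≤ |𝒮(X)|. -/
open Finset

/-- The ij-compression of a finite set: replace j by i if possible. -/
def comp (i j : ℕ) (A : Finset ℕ) : Finset ℕ :=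
  if j ∈ A ∧ i ∉ A then insert i (A.erase j) else A

/-- The ij-compression of a family of sets. -/
def compFam (i j : ℕ) (𝒜 : Finset (Finset ℕ)) : Finset (Finset ℕ) :=
  (𝒜.filter (fun A => comp i j A ∈ 𝒜)) ∪
    ((𝒜.filter (fun A => comp i j A ∉ 𝒜)).image (comp i j))

/-- A family is intersecting if any two members meet. -/
def IsIntersecting (𝒜 : Finset (Finset ℕ)) : Prop :=
  ∀ A ∈ 𝒜, ∀ B ∈ 𝒜, (A ∩ B).Nonempty

/-- A family is left-compressed if it is invariant under all ij-compressions, i < j. -/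
def LeftCompressed (𝒜 : Finset (Finset ℕ)) : Prop :=
  ∀ i j : ℕ, 1 ≤ i → i < j → compFam i j 𝒜 = 𝒜

/-- The compression order: same size and the k-th smallest element of `A` is at most
the k-th smallest element of `B`. -/
def domLE (A B : Finset ℕ) : Prop :=
  A.card = B.card ∧ ∀ (k : ℕ) (a b : ℕ), (A.sort (· ≤ ·))[k]? = some a →
    (B.sort (· ≤ ·))[k]? = some b → a ≤ b

/-- `A ≺ G` : `A` is generated by `G`, i.e. `|G| ≤ |A|` and the k-th smallest element
of `A` is at most the k-th smallest element of `G` for `k ≤ |G|`. -/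
def prec (A G : Finset ℕ) : Prop :=
  G.card ≤ A.card ∧ ∀ (k : ℕ) (a g : ℕ), (A.sort (· ≤ ·))[k]? = some a →
    (G.sort (· ≤ ·))[k]? = some g → a ≤ g

/-- The r-element subsets of [n] = {1, ..., n}. -/
def uniformOn (n r : ℕ) : Finset (Finset ℕ) := (Icc 1 n).powersetCard r

/-- The family ⟨𝒢⟩_r^n generated by 𝒢 under inclusion. -/
def genSub (r n : ℕ) (𝒢 : Finset (Finset ℕ)) : Finset (Finset ℕ) :=
  (uniformOn n r).filter (fun A => ∃ G ∈ 𝒢, G ⊆ A)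

open Classical in
/-- The family ⟨𝒢⟩_r^n generated by 𝒢 under ≺. -/
noncomputable def genP (r n : ℕ) (𝒢 : Finset (Finset ℕ)) : Finset (Finset ℕ) :=
  (uniformOn n r).filter (fun A => ∃ G ∈ 𝒢, prec A G)

/-- ℱ(X) : the members of ℱ meeting X. -/
def hitting (ℱ : Finset (Finset ℕ)) (X : Finset ℕ) : Finset (Finset ℕ) :=
  ℱ.filter (fun A => (A ∩ X).Nonempty)

/-- The star at 1 in [n]^(r). -/
def star (n r : ℕ) : Finset (Finset ℕ) := (uniformOn n r).filter (fun A => 1 ∈ A)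

/-- A maximal left-compressed intersecting subfamily of [n]^(r). -/
def MaxLCI (n r : ℕ) (𝒜 : Finset (Finset ℕ)) : Prop :=
  𝒜 ⊆ uniformOn n r ∧ LeftCompressed 𝒜 ∧ IsIntersecting 𝒜 ∧
    ∀ B ∈ uniformOn n r, B ∉ 𝒜 → ¬ IsIntersecting (insert B 𝒜)

/-- X is good for n and r. -/
def IsGood (n r : ℕ) (X : Finset ℕ) : Prop :=
  ∀ 𝒜 ⊆ uniformOn n r, LeftCompressed 𝒜 → IsIntersecting 𝒜 →
    (hitting 𝒜 X).card ≤ (hitting (star n r) X).card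

section Helpers

variable {𝒜 : Finset (Finset ℕ)} {A : Finset ℕ} {n r : ℕ}

lemma comp_mem (hLC : LeftCompressed 𝒜) {i j : ℕ} (hi : 1 ≤ i) (hij : i < j)
    (hA : A ∈ 𝒜) : comp i j A ∈ 𝒜 := by
  by_cases hc : comp i j A ∈ 𝒜
  · exact hc
  · have h := hLC i j hi hij
    have : comp i j A ∈ compFam i j 𝒜 :=
      mem_union_right _ (mem_image_of_mem _ (mem_filter.2 ⟨hA, hc⟩))
    rwa [h] at this

lemma swap_mem (hLC : LeftCompressed 𝒜) {x j : ℕ} (hx : 1 ≤ x) (hxj : x < j)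
    (hA : A ∈ 𝒜) (hj : j ∈ A) (hxA : x ∉ A) : insert x (A.erase j) ∈ 𝒜 := by
  have := comp_mem hLC hx hxj hA
  rwa [comp, if_pos ⟨hj, hxA⟩] at this

lemma sum_swap_lt {x j : ℕ} {B : Finset ℕ} (hj : j ∈ B) (hx : x ∉ B) (hxj : x < j) :
    ∑ b ∈ insert x (B.erase j), b < ∑ b ∈ B, b := by
  have hxe : x ∉ B.erase j := fun h => hx (mem_of_mem_erase h)
  rw [Finset.sum_insert hxe]
  have := Finset.sum_erase_add B id hj
  simp only [id] at this
  omega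

/-- Generic descent along decreasing element sums. -/
lemma descend {P Q : Finset ℕ → Prop} {B₀ : Finset ℕ} (h₀ : P B₀)
    (hstep : ∀ B, P B → ¬ Q B → ∃ B', P B' ∧ (∑ b ∈ B', b) < (∑ b ∈ B, b)) :
    ∃ C, P C ∧ Q C := by
  obtain ⟨m, hm⟩ : ∃ m, (∑ b ∈ B₀, b) = m := ⟨_, rfl⟩
  induction m using Nat.strong_induction_on generalizing B₀ with
  | _ m ih =>
    by_cases hq : Q B₀
    · exact ⟨B₀, h₀, hq⟩
    · obtain ⟨B', hP', hlt⟩ := hstep B₀ h₀ hq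
      exact ih _ (hm ▸ hlt) hP' rfl

lemma mem_uniform_iff {B : Finset ℕ} : B ∈ uniformOn n r ↔ B ⊆ Icc 1 n ∧ B.card = r := by
  simp [uniformOn, mem_powersetCard]

/-- If some member of 𝒜 omits 1 then [2, r+1] ∈ 𝒜. -/
lemma Icc2_mem (hsub : 𝒜 ⊆ uniformOn n r) (hLC : LeftCompressed 𝒜)
    (hA : A ∈ 𝒜) (h1 : 1 ∉ A) : Icc 2 (r+1) ∈ 𝒜 := by
  have key : ∃ C, (C ∈ 𝒜 ∧ 1 ∉ C) ∧ C = Icc 2 (r+1) := by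
    refine descend (P := fun B => B ∈ 𝒜 ∧ 1 ∉ B) (Q := fun B => B = Icc 2 (r+1))
      ⟨hA, h1⟩ ?_
    rintro B ⟨hB, h1B⟩ hne
    obtain ⟨hBs, hBc⟩ := mem_uniform_iff.1 (hsub hB)
    have hIc : (Icc 2 (r+1)).card = r := by rw [Nat.card_Icc]; omega
    have hnsub2 : ¬ Icc 2 (r+1) ⊆ B := fun h => hne (((eq_of_subset_of_card_le h (by omega)).symm))
    have hnsub1 : ¬ B ⊆ Icc 2 (r+1) := fun h => hne ((eq_of_subset_of_card_le h (by omega)))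
    obtain ⟨x, hxI, hxB⟩ := not_subset.1 hnsub2
    obtain ⟨j, hjB, hjI⟩ := not_subset.1 hnsub1
    have hx2 : 2 ≤ x ∧ x ≤ r+1 := by simpa [mem_Icc] using hxI
    have hj1 : 1 ≤ j := by have := hBs hjB; simp [mem_Icc] at this; omega
    have hj2 : 2 ≤ j := by
      rcases Nat.lt_or_ge j 2 with h2 | h2
      · have hj1' : j = 1 := by omega
        subst hj1'; exact absurd hjB h1B
      · exact h2
    have hj : r + 2 ≤ j := by
      rcases Nat.lt_or_ge j (r+2) with h | h
      · exfalso; apply hjI; simp [mem_Icc]; omega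
      · exact h
    refine ⟨insert x (B.erase j), ⟨swap_mem hLC (by omega) (by omega) hB hjB hxB, ?_⟩,
      sum_swap_lt hjB hxB (by omega)⟩
    simp only [mem_insert, not_or]
    exact ⟨by omega, fun h => h1B (mem_of_mem_erase h)⟩
  obtain ⟨C, ⟨hC, _⟩, hCe⟩ := key
  rwa [hCe] at hC

end Helpers

section Window

variable {𝒜 : Finset (Finset ℕ)} {A : Finset ℕ} {n r : ℕ}

/-- Every member of a left-compressed intersecting family that omits 1 has at least
two elements in [1, 2r+1]. -/
lemma window (hsub : 𝒜 ⊆ uniformOn n r) (hLC : LeftCompressed 𝒜)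
    (hInt : IsIntersecting 𝒜) (hr : 3 ≤ r)
    (hA : A ∈ 𝒜) (h1 : 1 ∉ A) : 2 ≤ (A ∩ Icc 1 (2*r+1)).card := by
  by_contra hsmall
  push_neg at hsmall
  have hsmall : (A ∩ Icc 1 (2*r+1)).card ≤ 1 := by omega
  obtain ⟨hAs, hAc⟩ := mem_uniform_iff.1 (hsub hA)
  have hAne : A.Nonempty := card_pos.mp (by omega)
  -- choose m ∈ A with A ∩ Z ⊆ {m}
  have hmex : ∃ m ∈ A, ∀ y ∈ A, y ∈ Icc 1 (2*r+1) → y = m := by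
    rcases (A ∩ Icc 1 (2*r+1)).eq_empty_or_nonempty with hZ | hZ
    · refine ⟨A.min' hAne, A.min'_mem hAne, fun y hy hyZ => ?_⟩
      exact absurd (mem_inter.2 ⟨hy, hyZ⟩) (by simp [hZ])
    · obtain ⟨m, hm⟩ := hZ
      refine ⟨m, (mem_inter.1 hm).1, fun y hy hyZ => ?_⟩
      exact Finset.card_le_one.mp hsmall y (mem_inter.2 ⟨hy, hyZ⟩) m hm
  obtain ⟨m, hmA, hmZ⟩ := hmex
  have hm2 : 2 ≤ m := by
    have := hAs hmA; simp [mem_Icc] at this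
    rcases Nat.lt_or_ge m 2 with h | h
    · exfalso; have : m = 1 := by omega
      exact h1 (this ▸ hmA)
    · exact h
  have hB₀ : insert 1 (A.erase m) ∈ 𝒜 := swap_mem hLC le_rfl (by omega) hA hmA h1
  have key : ∃ C, (C ∈ 𝒜 ∧ 1 ∈ C ∧ ∀ b ∈ C, b ∈ A → 2*r+2 ≤ b) ∧
      (∀ b ∈ C, b = 1 ∨ (b ∈ Icc 2 (2*r+1) ∧ b ∉ A)) := by
    refine descend ⟨hB₀, mem_insert_self _ _, ?_⟩ ?_
    · intro b hb hbA
      rcases mem_insert.1 hb with h | h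
      · exact absurd (h ▸ hbA) h1
      · have hbm : b ≠ m := ne_of_mem_erase h
        rcases Nat.lt_or_ge b (2*r+2) with hlt | hge
        · exfalso; apply hbm; apply hmZ b hbA
          simp [mem_Icc]
          have := hAs hbA; simp [mem_Icc] at this; omega
        · exact hge
    · rintro B ⟨hB, h1B, hinv⟩ hq
      push_neg at hq
      obtain ⟨j, hjB, hj1, hjw⟩ := hq
      obtain ⟨hBs, hBc⟩ := mem_uniform_iff.1 (hsub hB)
      have hjbig : 2*r+2 ≤ j := by
        by_cases hjA : j ∈ A
        · exact hinv j hjB hjA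
        · have h2j : 2 ≤ j := by
            have := hBs hjB; simp [mem_Icc] at this; omega
          have hnI : ¬ (j ∈ Icc 2 (2*r+1)) := fun hI => hjA (hjw hI)
          simp [mem_Icc] at hnI
          omega
      -- find x in Icc 2 (2r+1) avoiding A and B
      have hxex : ∃ x, x ∈ Icc 2 (2*r+1) ∧ x ∉ A ∧ x ∉ B := by
        set W := Icc 2 (2*r+1) with hW
        set t := (A ∩ W) ∪ B with ht
        have h1 : W.card ≤ (W \ t).card + t.card := card_le_card_sdiff_add_card
        have h2 : (A ∩ W).card ≤ 1 := by
          refine le_trans (card_le_card ?_) hsmall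
          exact inter_subset_inter Subset.rfl (Icc_subset_Icc (by omega) le_rfl)
        have h3 : t.card ≤ 1 + r := by
          calc t.card ≤ (A ∩ W).card + B.card := card_union_le _ _
          _ ≤ 1 + r := by omega
        have hWc : W.card = 2*r := by rw [hW, Nat.card_Icc]; omega
        have h4 : 0 < (W \ t).card := by omega
        obtain ⟨x, hx⟩ := card_pos.mp h4
        have hx1 := (mem_sdiff.1 hx).1
        have hx2 := (mem_sdiff.1 hx).2
        rw [ht] at hx2
        simp only [mem_union, mem_inter, not_or, not_and] at hx2
        exact ⟨x, hx1, fun hA' => hx2.1 hA' hx1, hx2.2⟩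
      obtain ⟨x, hxW, hxA, hxB⟩ := hxex
      have hxr : 2 ≤ x ∧ x ≤ 2*r+1 := by simpa [mem_Icc] using hxW
      have hB' : insert x (B.erase j) ∈ 𝒜 :=
        swap_mem hLC (by omega) (by omega) hB hjB hxB
      refine ⟨insert x (B.erase j), ⟨hB', ?_, ?_⟩, sum_swap_lt hjB hxB (by omega)⟩
      · exact mem_insert_of_mem (mem_erase.2 ⟨by omega, h1B⟩)
      · intro b hb hbA
        rcases mem_insert.1 hb with h | h
        · exact absurd (h ▸ hbA) hxA
        · exact hinv b (mem_of_mem_erase h) hbA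
  obtain ⟨C, ⟨hC, _, _⟩, hQ⟩ := key
  obtain ⟨y, hy⟩ := hInt A hA C hC
  have hyA := (mem_inter.1 hy).1
  have hyC := (mem_inter.1 hy).2
  rcases hQ y hyC with h | h
  · exact h1 (h ▸ hyA)
  · exact h.2 hyA

end Window
section PairNormalize

variable {𝒜 : Finset (Finset ℕ)} {A D : Finset ℕ} {n r : ℕ}

lemma normal_trace_inter (hr : 1 ≤ r) (hD : ∀ d ∈ D, d ∉ Icc 1 (2*r+1)) :
    (insert 2 (insert 3 D)) ∩ Icc 1 (2*r+1) = {2, 3} := by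
  ext x
  simp only [mem_inter, mem_insert, mem_singleton, mem_Icc]
  constructor
  · rintro ⟨h | h | h, hZ⟩
    · exact Or.inl h
    · exact Or.inr h
    · exact absurd (mem_Icc.2 hZ) (hD x h)
  · rintro (h | h) <;> subst h <;> refine ⟨by simp, by omega⟩
lemma normal_trace_sdiff (hr : 1 ≤ r) (hD : ∀ d ∈ D, d ∉ Icc 1 (2*r+1)) :
    (insert 2 (insert 3 D)) \ Icc 1 (2*r+1) = D := by
  ext x
  simp only [mem_sdiff, mem_insert, mem_Icc]
  constructor
  · rintro ⟨h | h | h, hZ⟩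
    · subst h; exfalso; apply hZ; omega
    · subst h; exfalso; apply hZ; omega
    · exact h
  · intro h
    refine ⟨Or.inr (Or.inr h), ?_⟩
    have := hD x h; simpa [mem_Icc] using this

lemma normal_trace_one (hr : 1 ≤ r) (hD : ∀ d ∈ D, d ∉ Icc 1 (2*r+1)) :
    1 ∉ insert 2 (insert 3 D) := by
  simp only [mem_insert]
  push_neg
  refine ⟨by omega, by omega, fun h => hD 1 h (mem_Icc.2 ⟨le_rfl, by omega⟩)⟩

lemma pair_normalize_aux (hsub : 𝒜 ⊆ uniformOn n r) (hLC : LeftCompressed 𝒜)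
    (hr : 1 ≤ r) (hA : A ∈ 𝒜) (h1 : 1 ∉ A) {u v : ℕ} (huv : u < v)
    (hT2 : A ∩ Icc 1 (2*r+1) = {u, v}) :
    insert 2 (insert 3 (A \ Icc 1 (2*r+1))) ∈ 𝒜 := by
  set Z := Icc 1 (2*r+1) with hZdef
  set D := A \ Z with hDdef
  have huA : u ∈ A := by
    have : u ∈ A ∩ Z := by rw [hT2]; simp
    exact (mem_inter.1 this).1
  have hvA : v ∈ A := by
    have : v ∈ A ∩ Z := by rw [hT2]; simp
    exact (mem_inter.1 this).1
  obtain ⟨hAs, hAc⟩ := mem_uniform_iff.1 (hsub hA)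
  have hu2 : 2 ≤ u := by
    have := hAs huA; simp [mem_Icc] at this
    rcases Nat.lt_or_ge u 2 with h | h
    · exfalso; have : u = 1 := by omega
      exact h1 (this ▸ huA)
    · exact h
  have hv3 : 3 ≤ v := by omega
  have hvD : v ∉ D := by
    intro h
    have := (mem_sdiff.1 h).2
    apply this
    have : v ∈ A ∩ Z := by rw [hT2]; simp
    exact (mem_inter.1 this).2
  have huD : u ∉ D := by
    intro h
    have := (mem_sdiff.1 h).2
    apply this
    have : u ∈ A ∩ Z := by rw [hT2]; simp
    exact (mem_inter.1 this).2
  have hAeq : A = insert u (insert v D) := by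
    have h0 : A \ Z ∪ A ∩ Z = A := sdiff_union_inter A Z
    rw [hT2] at h0
    rw [← h0, hDdef]
    ext x
    simp only [mem_union, mem_insert, mem_singleton, mem_sdiff]
    tauto
  -- step 1 : replace u by 2
  have step1 : insert 2 (insert v D) ∈ 𝒜 := by
    by_cases hu : u = 2
    · rw [← hu]; rw [← hAeq]; exact hA
    · have h2A : 2 ∉ A := by
        intro h2
        have : (2:ℕ) ∈ A ∩ Z := mem_inter.2 ⟨h2, by simp [hZdef, mem_Icc]; omega⟩
        rw [hT2] at this
        simp only [mem_insert, mem_singleton] at this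
        omega
      have := swap_mem hLC (by omega) (by omega : 2 < u) hA huA h2A
      have herase : A.erase u = insert v D := by
        rw [hAeq]
        exact erase_insert (by simp only [mem_insert]; push_neg; exact ⟨by omega, huD⟩)
      rwa [herase] at this
  -- step 2 : replace v by 3
  by_cases hv : v = 3
  · rwa [← hv]
  · have h3 : 3 ∉ insert 2 (insert v D) := by
      simp only [mem_insert]
      push_neg
      refine ⟨by omega, by omega, fun h => ?_⟩
      have := (mem_sdiff.1 h).2
      exact this (by simp [hZdef, mem_Icc]; omega)
    have hvmem : v ∈ insert 2 (insert v D) := by simp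
    have := swap_mem hLC (by omega) (by omega : 3 < v) step1 hvmem h3
    have herase : (insert 2 (insert v D)).erase v = insert 2 D := by
      rw [erase_insert_of_ne (by omega : (2:ℕ) ≠ v), erase_insert hvD]
    rw [herase] at this
    rwa [Finset.insert_comm] at this

lemma pair_normalize (hsub : 𝒜 ⊆ uniformOn n r) (hLC : LeftCompressed 𝒜)
    (hr : 1 ≤ r) (hA : A ∈ 𝒜) (h1 : 1 ∉ A)
    (hT : (A ∩ Icc 1 (2*r+1)).card = 2) :
    insert 2 (insert 3 (A \ Icc 1 (2*r+1))) ∈ 𝒜 := by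
  obtain ⟨u, v, huv, hT2⟩ := card_eq_two.mp hT
  rcases huv.lt_or_gt with h | h
  · exact pair_normalize_aux hsub hLC hr hA h1 h hT2
  · rw [pair_comm] at hT2
    exact pair_normalize_aux hsub hLC hr hA h1 h hT2

end PairNormalize
section Arith

lemma choose_step {m k : ℕ} (h : 2*k+1 ≤ m) : m.choose k ≤ m.choose (k+1) := by
  have h3 : m.choose (k+1) * (k+1) = m.choose k * (m - k) := Nat.choose_succ_right_eq m k
  have : m.choose k * (k+1) ≤ m.choose k * (m - k) :=
    Nat.mul_le_mul_left _ (by omega)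
  rw [← h3] at this
  exact Nat.le_of_mul_le_mul_right this (by omega)

lemma choose_right_mono {m j k : ℕ} (hjk : j ≤ k) (h : 2*k ≤ m) :
    m.choose j ≤ m.choose k := by
  induction k with
  | zero => simp at hjk; simp [hjk]
  | succ k' ih =>
    rcases Nat.eq_or_lt_of_le hjk with he | hlt
    · rw [he]
    · exact le_trans (ih (by omega) (by omega)) (choose_step (by omega))

lemma choose_shift_one {n k : ℕ} (h : 2*k+1 ≤ n) : n.choose k ≤ 2 * (n-1).choose k := by
  cases k with
  | zero => simp
  | succ k' =>
    have hn : n = (n-1) + 1 := by omega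
    rw [hn, Nat.choose_succ_succ']
    simp only [Nat.add_sub_cancel]
    have := choose_step (m := n-1) (k := k') (by omega)
    omega

lemma choose_shift {k : ℕ} (c : ℕ) : ∀ n, 2*k + c ≤ n → n.choose k ≤ 2^c * (n - c).choose k := by
  induction c with
  | zero => intro n _; simpa using le_rfl
  | succ c' ih =>
    intro n hn
    have h1 : n.choose k ≤ 2 * (n-1).choose k := choose_shift_one (by omega)
    have h2 : (n-1).choose k ≤ 2^c' * (n - 1 - c').choose k := ih (n-1) (by omega)
    have : n - 1 - c' = n - (c'+1) := by omega
    rw [this] at h2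
    calc n.choose k ≤ 2 * (n-1).choose k := h1
    _ ≤ 2 * (2^c' * (n - (c'+1)).choose k) := Nat.mul_le_mul_left _ h2
    _ = 2^(c'+1) * (n - (c'+1)).choose k := by ring

lemma main_asym (K c k : ℕ) : ∃ N : ℕ, ∀ n, N ≤ n → K * n.choose k ≤ (n - c).choose (k+1) := by
  refine ⟨2*(k+1) + c + K*(k+1)*2^c + 1, fun n hn => ?_⟩
  set m := n - c with hm
  have h1 : n.choose k ≤ 2^c * m.choose k := choose_shift c n (by omega)
  have h2 : K*(k+1)*2^c ≤ m - k := by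
    have h2' : 2^c ≥ 1 := Nat.one_le_two_pow
    omega
  have h3 : m.choose (k+1) * (k+1) = m.choose k * (m - k) := Nat.choose_succ_right_eq m k
  have key : K * n.choose k * (k+1) ≤ m.choose (k+1) * (k+1) := by
    calc K * n.choose k * (k+1) ≤ K * (2^c * m.choose k) * (k+1) :=
          Nat.mul_le_mul_right _ (Nat.mul_le_mul_left _ h1)
    _ = (K*(k+1)*2^c) * m.choose k := by ring
    _ ≤ (m - k) * m.choose k := Nat.mul_le_mul_right _ h2
    _ = m.choose k * (m - k) := Nat.mul_comm _ _
    _ = m.choose (k+1) * (k+1) := h3.symm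
  exact Nat.le_of_mul_le_mul_right key (by omega)

end Arith
section Counting

variable {𝒜 F : Finset (Finset ℕ)} {A : Finset ℕ} {n r : ℕ}

lemma trace_sdiff_card (hA : A ∈ uniformOn n r) {T : Finset ℕ}
    (hT : A ∩ Icc 1 (2*r+1) = T) : (A \ Icc 1 (2*r+1)).card = r - T.card := by
  obtain ⟨hAs, hAc⟩ := mem_uniform_iff.1 hA
  have := Finset.card_sdiff_add_card_inter A (Icc 1 (2*r+1))
  rw [hT] at this
  omega

lemma recover_eq {A A' T : Finset ℕ} (hT : A ∩ Icc 1 (2*r+1) = T)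
    (hT' : A' ∩ Icc 1 (2*r+1) = T) (hd : A \ Icc 1 (2*r+1) = A' \ Icc 1 (2*r+1)) :
    A = A' := by
  have h1 := sdiff_union_inter A (Icc 1 (2*r+1))
  have h2 := sdiff_union_inter A' (Icc 1 (2*r+1))
  rw [← h1, ← h2, hT, hT', hd]

lemma fiber_card (hF : F ⊆ uniformOn n r) (T : Finset ℕ) :
    (F.filter (fun A => A ∩ Icc 1 (2*r+1) = T)).card ≤ n.choose (r - T.card) := by
  have h := Finset.card_le_card_of_injOn (f := fun A => A \ Icc 1 (2*r+1))
    (s := F.filter (fun A => A ∩ Icc 1 (2*r+1) = T))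
    (t := (Icc 1 n).powersetCard (r - T.card)) ?_ ?_
  · rwa [card_powersetCard, Nat.card_Icc, Nat.add_sub_cancel] at h
  · intro A hA
    obtain ⟨hA𝒜, hAT⟩ := mem_filter.1 hA
    obtain ⟨hAs, hAc⟩ := mem_uniform_iff.1 (hF hA𝒜)
    exact mem_powersetCard.2 ⟨(sdiff_subset).trans hAs, trace_sdiff_card (hF hA𝒜) hAT⟩
  · intro A hA A' hA' he
    exact recover_eq (mem_filter.1 hA).2 (mem_filter.1 hA').2 he

lemma class23_card (hF : F ⊆ uniformOn n r) (hn : 2*r+2 ≤ n) :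
    (F.filter (fun A => A ∩ Icc 1 (2*r+1) = {2,3})).card ≤ (n - (2*r+1)).choose (r-2) := by
  have h := Finset.card_le_card_of_injOn (f := fun A => A \ Icc 1 (2*r+1))
    (s := F.filter (fun A => A ∩ Icc 1 (2*r+1) = {2,3}))
    (t := (Icc (2*r+2) n).powersetCard (r - 2)) ?_ ?_
  · rw [card_powersetCard, Nat.card_Icc] at h
    have he : n + 1 - (2*r+2) = n - (2*r+1) := by omega
    rwa [he] at h
  · intro A hA
    obtain ⟨hA𝒜, hAT⟩ := mem_filter.1 hA
    obtain ⟨hAs, hAc⟩ := mem_uniform_iff.1 (hF hA𝒜)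
    refine mem_powersetCard.2 ⟨?_, ?_⟩
    · intro y hy
      have hy1 := (mem_sdiff.1 hy).1
      have hy2 := (mem_sdiff.1 hy).2
      have := hAs hy1
      simp only [mem_Icc] at this ⊢
      simp only [mem_Icc] at hy2
      omega
    · have := trace_sdiff_card (hF hA𝒜) hAT
      simpa using this
  · intro A hA A' hA' he
    exact recover_eq (mem_filter.1 hA).2 (mem_filter.1 hA').2 he

lemma touch_card (hF : F ⊆ uniformOn n r) (S : Finset ℕ) :
    (F.filter (fun A => A ∩ Icc 1 (2*r+1) = {2,3} ∧
      ((A \ Icc 1 (2*r+1)) ∩ S).Nonempty)).card ≤ S.card * n.choose (r-3) := by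
  set Z := Icc 1 (2*r+1) with hZ
  have hsub : F.filter (fun A => A ∩ Z = {2,3} ∧ ((A \ Z) ∩ S).Nonempty) ⊆
      S.biUnion (fun s => F.filter (fun A => A ∩ Z = {2,3} ∧ s ∈ A \ Z)) := by
    intro A hA
    obtain ⟨hAF, hAT, ⟨s, hs⟩⟩ := mem_filter.1 hA
    exact mem_biUnion.2 ⟨s, (mem_inter.1 hs).2, mem_filter.2 ⟨hAF, hAT, (mem_inter.1 hs).1⟩⟩
  refine le_trans (card_le_card hsub) (le_trans Finset.card_biUnion_le ?_)
  have hper : ∀ s, (F.filter (fun A => A ∩ Z = {2,3} ∧ s ∈ A \ Z)).card ≤ n.choose (r-3) := by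
    intro s
    have h := Finset.card_le_card_of_injOn (f := fun A => (A \ Z).erase s)
      (s := F.filter (fun A => A ∩ Z = {2,3} ∧ s ∈ A \ Z))
      (t := (Icc 1 n).powersetCard (r - 3)) ?_ ?_
    · rwa [card_powersetCard, Nat.card_Icc, Nat.add_sub_cancel] at h
    · intro A hA
      obtain ⟨hAF, hAT, hsA⟩ := mem_filter.1 hA
      obtain ⟨hAs, hAc⟩ := mem_uniform_iff.1 (hF hAF)
      refine mem_powersetCard.2 ⟨((erase_subset _ _).trans sdiff_subset).trans hAs, ?_⟩
      rw [Finset.card_erase_of_mem hsA, trace_sdiff_card (hF hAF) hAT]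
      have : ({2,3} : Finset ℕ).card = 2 := by decide
      rw [this]
      omega
    · intro A hA A' hA' he
      obtain ⟨hAF, hAT, hsA⟩ := mem_filter.1 hA
      obtain ⟨hAF', hAT', hsA'⟩ := mem_filter.1 hA'
      refine recover_eq hAT hAT' ?_
      rw [← Finset.insert_erase hsA, ← Finset.insert_erase hsA']
      exact congrArg (insert s) he
  calc ∑ s ∈ S, (F.filter (fun A => A ∩ Z = {2,3} ∧ s ∈ A \ Z)).card
      ≤ ∑ s ∈ S, n.choose (r-3) := Finset.sum_le_sum (fun s _ => hper s)
  _ = S.card * n.choose (r-3) := by rw [Finset.sum_const, smul_eq_mul]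

lemma fiberwise_bound (hF : F ⊆ uniformOn n r) (M : ℕ)
    (hfib : ∀ T ∈ (Icc 1 (2*r+1)).powerset,
      (F.filter (fun A => A ∩ Icc 1 (2*r+1) = T)).card ≤ M) :
    F.card ≤ 2^(2*r+1) * M := by
  set Z := Icc 1 (2*r+1) with hZ
  have h1 : F.card = ∑ T ∈ Z.powerset, (F.filter (fun A => A ∩ Z = T)).card :=
    Finset.card_eq_sum_card_fiberwise (fun A _ => Finset.mem_powerset.2 inter_subset_right)
  rw [h1]
  calc ∑ T ∈ Z.powerset, (F.filter (fun A => A ∩ Z = T)).card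
      ≤ ∑ T ∈ Z.powerset, M := Finset.sum_le_sum (fun T hT => hfib T hT)
  _ = Z.powerset.card * M := by rw [Finset.sum_const, smul_eq_mul]
  _ = 2^(2*r+1) * M := by rw [Finset.card_powerset, Nat.card_Icc, Nat.add_sub_cancel]

lemma insert_pair_card {a k : ℕ} {U : Finset ℕ} (ha : a ∉ U) (h1U : (1:ℕ) ∉ U) (ha1 : a ≠ 1) :
    ((U.powersetCard k).image (fun S => insert 1 (insert a S))).card = U.card.choose k := by
  rw [Finset.card_image_of_injOn, card_powersetCard]
  intro S hS S' hS' he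
  simp only [Finset.mem_coe] at hS hS'
  have hSU : S ⊆ U := (mem_powersetCard.1 hS).1
  have hSU' : S' ⊆ U := (mem_powersetCard.1 hS').1
  have h1S : 1 ∉ insert a S := by
    simp only [mem_insert]; push_neg; exact ⟨fun h => ha1 h.symm, fun h => h1U (hSU h)⟩
  have h1S' : 1 ∉ insert a S' := by
    simp only [mem_insert]; push_neg; exact ⟨fun h => ha1 h.symm, fun h => h1U (hSU' h)⟩
  have haS : a ∉ S := fun h => ha (hSU h)
  have haS' : a ∉ S' := fun h => ha (hSU' h)
  have : insert a S = insert a S' := by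
    have := congrArg (fun t => Finset.erase t 1) he
    simpa [Finset.erase_insert h1S, Finset.erase_insert h1S'] using this
  have := congrArg (fun t => Finset.erase t a) this
  simpa [Finset.erase_insert haS, Finset.erase_insert haS'] using this

end Counting
section BigClass

variable {𝒜 : Finset (Finset ℕ)} {A : Finset ℕ} {n r : ℕ}

lemma avoid_exists (hsub : 𝒜 ⊆ uniformOn n r)
    (hbig : r * n.choose (r-3) <
      (𝒜.filter (fun A => ¬ 1 ∈ A ∧ A ∩ Icc 1 (2*r+1) = {2,3})).card)
    (S : Finset ℕ) (hS : S.card ≤ r) :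
    ∃ A' ∈ 𝒜, ¬ 1 ∈ A' ∧ A' ∩ Icc 1 (2*r+1) = {2,3} ∧
      (A' \ Icc 1 (2*r+1)) ∩ S = ∅ := by
  set Z := Icc 1 (2*r+1) with hZ
  by_contra hcon
  push_neg at hcon
  have hsub2 : (𝒜.filter (fun A => ¬ 1 ∈ A ∧ A ∩ Z = {2,3})) ⊆
      𝒜.filter (fun A => A ∩ Z = {2,3} ∧ ((A \ Z) ∩ S).Nonempty) := by
    intro A hA
    obtain ⟨hA𝒜, h1A, hAT⟩ := mem_filter.1 hA
    refine mem_filter.2 ⟨hA𝒜, hAT, ?_⟩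
    exact hcon A hA𝒜 h1A hAT
  have := le_trans (card_le_card hsub2) (touch_card hsub S)
  have h2 : S.card * n.choose (r-3) ≤ r * n.choose (r-3) :=
    Nat.mul_le_mul_right _ hS
  omega

lemma meets23 (hsub : 𝒜 ⊆ uniformOn n r) (hInt : IsIntersecting 𝒜)
    (hbig : r * n.choose (r-3) <
      (𝒜.filter (fun A => ¬ 1 ∈ A ∧ A ∩ Icc 1 (2*r+1) = {2,3})).card)
    {B : Finset ℕ} (hB : B ∈ 𝒜) : 2 ∈ B ∨ 3 ∈ B := by
  set Z := Icc 1 (2*r+1) with hZ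
  have hBc : B.card = r := (mem_uniform_iff.1 (hsub hB)).2
  obtain ⟨A', hA', h1A', hAT', hAS'⟩ := avoid_exists hsub hbig B (le_of_eq hBc)
  obtain ⟨y, hy⟩ := hInt A' hA' B hB
  have hyA := (mem_inter.1 hy).1
  have hyB := (mem_inter.1 hy).2
  by_cases hyZ : y ∈ Z
  · have : y ∈ A' ∩ Z := mem_inter.2 ⟨hyA, hyZ⟩
    rw [hAT'] at this
    simp only [mem_insert, mem_singleton] at this
    rcases this with h | h
    · exact Or.inl (h ▸ hyB)
    · exact Or.inr (h ▸ hyB)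
  · exfalso
    have : y ∈ (A' \ Z) ∩ B := mem_inter.2 ⟨mem_sdiff.2 ⟨hyA, hyZ⟩, hyB⟩
    rw [hAS'] at this
    exact absurd this (notMem_empty y)

lemma kill_aux (hsub : 𝒜 ⊆ uniformOn n r) (hLC : LeftCompressed 𝒜)
    (hInt : IsIntersecting 𝒜)
    (hbig : r * n.choose (r-3) <
      (𝒜.filter (fun A => ¬ 1 ∈ A ∧ A ∩ Icc 1 (2*r+1) = {2,3})).card)
    (hA : A ∈ 𝒜) (h1 : ¬ 1 ∈ A) {u v : ℕ} (huv : u < v)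
    (hT2 : A ∩ Icc 1 (2*r+1) = {u, v}) : A ∩ Icc 1 (2*r+1) = {2, 3} := by
  set Z := Icc 1 (2*r+1) with hZ
  have huA : u ∈ A := by
    have : u ∈ A ∩ Z := by rw [hT2]; simp
    exact (mem_inter.1 this).1
  obtain ⟨hAs, hAc⟩ := mem_uniform_iff.1 (hsub hA)
  have hu2 : 2 ≤ u := by
    have := hAs huA; simp [mem_Icc] at this
    rcases Nat.lt_or_ge u 2 with h | h
    · exfalso; have : u = 1 := by omega
      exact h1 (this ▸ huA)
    · exact h
  have hv3 : v ≤ 3 := by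
    by_contra hv4
    push_neg at hv4
    have hB₀ : insert 1 (A.erase u) ∈ 𝒜 := swap_mem hLC le_rfl (by omega) hA huA h1
    have hB₀c : (insert 1 (A.erase u)).card ≤ r := by
      rw [Finset.card_insert_of_notMem (fun h => h1 (mem_of_mem_erase h)),
        Finset.card_erase_of_mem huA, hAc]
      have hrpos : 0 < r := hAc ▸ card_pos.2 ⟨u, huA⟩
      omega
    obtain ⟨A', hA', h1A', hAT', hAS'⟩ := avoid_exists hsub hbig _ hB₀c
    obtain ⟨y, hy⟩ := hInt A' hA' _ hB₀
    have hyA := (mem_inter.1 hy).1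
    have hyB := (mem_inter.1 hy).2
    by_cases hyZ : y ∈ Z
    · have hy23 : y ∈ ({2,3} : Finset ℕ) := by
        rw [← hAT']; exact mem_inter.2 ⟨hyA, hyZ⟩
      simp only [mem_insert, mem_singleton] at hy23
      rcases mem_insert.1 hyB with h | h
      · rcases hy23 with h2 | h2 <;> omega
      · have hyA2 : y ∈ A := mem_of_mem_erase h
        have hyne : y ≠ u := ne_of_mem_erase h
        have : y ∈ A ∩ Z := mem_inter.2 ⟨hyA2, hyZ⟩
        rw [hT2] at this
        simp only [mem_insert, mem_singleton] at this
        rcases hy23 with h2 | h2 <;> rcases this with h3 | h3 <;> omega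
    · have : y ∈ (A' \ Z) ∩ insert 1 (A.erase u) :=
        mem_inter.2 ⟨mem_sdiff.2 ⟨hyA, hyZ⟩, hyB⟩
      rw [hAS'] at this
      exact absurd this (notMem_empty y)
  have : u = 2 ∧ v = 3 := by omega
  rw [hT2, this.1, this.2]

lemma kill (hsub : 𝒜 ⊆ uniformOn n r) (hLC : LeftCompressed 𝒜)
    (hInt : IsIntersecting 𝒜)
    (hbig : r * n.choose (r-3) <
      (𝒜.filter (fun A => ¬ 1 ∈ A ∧ A ∩ Icc 1 (2*r+1) = {2,3})).card)
    (hA : A ∈ 𝒜) (h1 : ¬ 1 ∈ A) (hc2 : (A ∩ Icc 1 (2*r+1)).card = 2) :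
    A ∩ Icc 1 (2*r+1) = {2, 3} := by
  obtain ⟨u, v, hne, hT2⟩ := card_eq_two.mp hc2
  rcases hne.lt_or_gt with h | h
  · exact kill_aux hsub hLC hInt hbig hA h1 h hT2
  · rw [pair_comm] at hT2
    exact kill_aux hsub hLC hInt hbig hA h1 h hT2

end BigClass
theorem stmt18 (r : ℕ) (hr : 3 ≤ r) (X : Finset ℕ) (hX2 : ∀ x ∈ X, 2 ≤ x)
    (hcard : X.card ≤ r) (hnsub : ¬ X ⊆ Icc 2 (r + 1))
    (hcond : 4 ≤ X.card ∨ (X.card = 3 ∧ ¬ ({2, 3} : Finset ℕ) ⊆ X) ∨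
      (X.card = 2 ∧ 2 ∉ X ∧ 3 ∉ X) ∨ X.card = 1) :
    ∃ N : ℕ, ∀ n : ℕ, N ≤ n → IsGood n r X := by
  classical
  obtain ⟨x, hxX, hxI⟩ := not_subset.1 hnsub
  have hx2 : 2 ≤ x := hX2 x hxX
  have hxr : r + 2 ≤ x := by
    simp only [mem_Icc, not_and, not_le] at hxI
    omega
  obtain ⟨N₁, hN₁⟩ := main_asym (2^(2*r+2) * r) (r+2) (r-3)
  obtain ⟨N₃, hN₃⟩ := main_asym (2^(2*r+2) * r) 4 (r-3)
  refine ⟨N₁ + N₃ + 4*r + 12 + X.sup id, fun n hn => ?_⟩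
  intro 𝒜 hsub hLC hInt
  have hxn : x ≤ n := le_trans (Finset.le_sup (f := id) hxX) (by omega)
  have hr32 : r - 3 + 1 = r - 2 := by omega
  have hn4r : 4*r + 12 ≤ n := by
    have : X.sup id ≤ n := le_trans (by omega : X.sup id ≤ N₁ + N₃ + 4*r + 12 + X.sup id) hn
    omega
  -- memberships
  have hHAmem : ∀ {A : Finset ℕ}, A ∈ hitting 𝒜 X ↔ A ∈ 𝒜 ∧ (A ∩ X).Nonempty := by
    intro A; rw [hitting]; exact mem_filter
  have hHSmem : ∀ {B : Finset ℕ},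
      B ∈ hitting (star n r) X ↔ (B ∈ uniformOn n r ∧ 1 ∈ B) ∧ (B ∩ X).Nonempty := by
    intro B
    rw [hitting]
    rw [show star n r = (uniformOn n r).filter (fun A => 1 ∈ A) from rfl]
    rw [mem_filter, mem_filter]
  set S1 := (hitting 𝒜 X).filter (fun A => 1 ∈ A) with hS1def
  set S0 := (hitting 𝒜 X).filter (fun A => ¬ 1 ∈ A) with hS0def
  set ℰ := (hitting (star n r) X).filter (fun B => ¬ B ∈ 𝒜) with hℰdef
  have hS0mem : ∀ {A : Finset ℕ}, A ∈ S0 → A ∈ 𝒜 ∧ ¬ 1 ∈ A ∧ (A ∩ X).Nonempty := by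
    intro A hA
    obtain ⟨h1, h2⟩ := mem_filter.1 hA
    obtain ⟨h3, h4⟩ := hHAmem.1 h1
    exact ⟨h3, h2, h4⟩
  have hS0uni : S0 ⊆ uniformOn n r := fun A hA => hsub (hS0mem hA).1
  -- the key inequality
  have hkey : S0.card ≤ ℰ.card := by
    rcases Finset.eq_empty_or_nonempty S0 with hS0e | hS0ne
    · simp [hS0e]
    obtain ⟨A₀, hA₀⟩ := hS0ne
    obtain ⟨hA₀𝒜, h1A₀, _⟩ := hS0mem hA₀
    have hIccA : Icc 2 (r+1) ∈ 𝒜 := Icc2_mem hsub hLC hA₀𝒜 h1A₀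
    have hnm : ∀ B : Finset ℕ, B ∩ Icc 2 (r+1) = ∅ → ¬ B ∈ 𝒜 := by
      intro B hB hB𝒜
      obtain ⟨y, hy⟩ := hInt B hB𝒜 _ hIccA
      rw [hB] at hy
      exact absurd hy (notMem_empty y)
    -- the common witness family G
    have hxU : x ∈ Icc (r+2) n := by simp only [mem_Icc]; omega
    have hUcard : (Icc (r+2) n \ {x}).card = n - (r+2) := by
      rw [card_sdiff_of_subset (by simpa using hxU), Nat.card_Icc, card_singleton]
      omega
    have hUelt : ∀ u ∈ Icc (r+2) n \ {x}, r+2 ≤ u ∧ u ≤ n := by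
      intro u hu
      have := (mem_sdiff.1 hu).1
      simpa [mem_Icc] using this
    have hGsub : ((Icc (r+2) n \ {x}).powersetCard (r-2)).image
        (fun S => insert 1 (insert x S)) ⊆ ℰ := by
      intro B hB
      obtain ⟨S, hS, hBe⟩ := mem_image.1 hB
      obtain ⟨hSU, hScard⟩ := mem_powersetCard.1 hS
      have hxS : x ∉ S := fun h => (mem_sdiff.1 (hSU h)).2 (by simp)
      have h1S : (1:ℕ) ∉ insert x S := by
        simp only [mem_insert]; push_neg
        exact ⟨by omega, fun h => by have := (hUelt _ (hSU h)).1; omega⟩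
      have hBcard : B.card = r := by
        rw [← hBe, card_insert_of_notMem h1S, card_insert_of_notMem hxS, hScard]
        omega
      have hBIcc : B ⊆ Icc 1 n := by
        rw [← hBe]
        intro y hy
        simp only [mem_Icc]
        rcases mem_insert.1 hy with h | h
        · omega
        rcases mem_insert.1 h with h2 | h2
        · omega
        · have := hUelt _ (hSU h2); omega
      have h1B : 1 ∈ B := by rw [← hBe]; exact mem_insert_self _ _
      have hBX : (B ∩ X).Nonempty :=
        ⟨x, mem_inter.2 ⟨by rw [← hBe]; exact mem_insert_of_mem (mem_insert_self _ _), hxX⟩⟩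
      have hBnm : B ∩ Icc 2 (r+1) = ∅ := by
        rw [← hBe]
        ext y
        simp only [mem_inter, mem_insert, mem_Icc, notMem_empty, iff_false, not_and]
        rintro (h | h | h) <;> intro hc
        · omega
        · omega
        · have := hUelt _ (hSU h); omega
      exact mem_filter.2 ⟨hHSmem.2 ⟨⟨mem_uniform_iff.2 ⟨hBIcc, hBcard⟩, h1B⟩, hBX⟩, hnm B hBnm⟩
    have hGcard : (((Icc (r+2) n \ {x}).powersetCard (r-2)).image
        (fun S => insert 1 (insert x S))).card = (n - (r+2)).choose (r-2) := by
      rw [insert_pair_card (by simp) ?h1U (by omega), hUcard]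
      case h1U =>
        intro h
        have := hUelt _ h
        omega
    -- window
    have hwin : ∀ A ∈ S0, 2 ≤ (A ∩ Icc 1 (2*r+1)).card := by
      intro A hA
      obtain ⟨h1, h2, _⟩ := hS0mem hA
      exact window hsub hLC hInt hr h1 h2
    -- finisher for the cases bounded by K₁ * C(n, r-3)
    have hfin : S0.card ≤ (2^(2*r+2) * r) * n.choose (r-3) → S0.card ≤ ℰ.card := by
      intro hL
      have h2 := hN₁ n (by omega)
      rw [hr32] at h2
      calc S0.card ≤ (2^(2*r+2) * r) * n.choose (r-3) := hL
      _ ≤ (n - (r+2)).choose (r-2) := h2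
      _ = _ := hGcard.symm
      _ ≤ ℰ.card := card_le_card hGsub
    by_cases hbig : r * n.choose (r-3) <
        (𝒜.filter (fun A => ¬ 1 ∈ A ∧ A ∩ Icc 1 (2*r+1) = {2,3})).card
    · -- the class of trace {2,3} is big
      have hsplit := Finset.card_filter_add_card_filter_not (s := S0)
        (p := fun A => A ∩ Icc 1 (2*r+1) = ({2,3} : Finset ℕ))
      have hrest : (S0.filter (fun A => ¬ A ∩ Icc 1 (2*r+1) = ({2,3} : Finset ℕ))).card ≤
          2^(2*r+1) * n.choose (r-3) := by
        refine fiberwise_bound ((filter_subset _ _).trans hS0uni) _ ?_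
        intro T hT
        rcases Nat.lt_or_ge T.card 3 with h3 | h3
        · have hemp : (S0.filter (fun A => ¬ A ∩ Icc 1 (2*r+1) = ({2,3} : Finset ℕ))).filter
              (fun A => A ∩ Icc 1 (2*r+1) = T) = ∅ := by
            rw [Finset.filter_eq_empty_iff]
            intro A hA hAT
            obtain ⟨hAS0, hAne⟩ := mem_filter.1 hA
            have hw := hwin A hAS0
            rw [hAT] at hw
            have hc2 : T.card = 2 := by omega
            obtain ⟨h1, h2, _⟩ := hS0mem hAS0
            have := kill hsub hLC hInt hbig h1 h2 (by rw [hAT]; exact hc2)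
            exact hAne this
          rw [hemp]
          simp
        · refine le_trans (le_trans (card_le_card (filter_subset_filter _ (filter_subset _ _)))
            (fiber_card hS0uni T)) ?_
          exact choose_right_mono (m := n) (j := r - T.card) (k := r - 3) (by omega) (by omega)
      -- case split on X ∩ {2,3}
      by_cases hX23 : X ∩ ({2,3} : Finset ℕ) = ∅
      · -- trace-{2,3} members must hit X through their tail
        apply hfin
        have hf23 : (S0.filter (fun A => A ∩ Icc 1 (2*r+1) = ({2,3} : Finset ℕ))).card ≤
            r * n.choose (r-3) := by
          have hsub23 : S0.filter (fun A => A ∩ Icc 1 (2*r+1) = ({2,3} : Finset ℕ)) ⊆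
              S0.filter (fun A => A ∩ Icc 1 (2*r+1) = ({2,3} : Finset ℕ) ∧
                ((A \ Icc 1 (2*r+1)) ∩ X).Nonempty) := by
            intro A hA
            obtain ⟨hAS0, hAT⟩ := mem_filter.1 hA
            obtain ⟨_, _, hAX⟩ := hS0mem hAS0
            obtain ⟨y, hy⟩ := hAX
            have hyA := (mem_inter.1 hy).1
            have hyX := (mem_inter.1 hy).2
            refine mem_filter.2 ⟨hAS0, hAT, ⟨y, mem_inter.2 ⟨mem_sdiff.2 ⟨hyA, ?_⟩, hyX⟩⟩⟩
            intro hyZ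
            have : y ∈ A ∩ Icc 1 (2*r+1) := mem_inter.2 ⟨hyA, hyZ⟩
            rw [hAT] at this
            have : y ∈ X ∩ ({2,3} : Finset ℕ) := mem_inter.2 ⟨hyX, this⟩
            rw [hX23] at this
            exact absurd this (notMem_empty y)
          refine le_trans (card_le_card hsub23) (le_trans (touch_card hS0uni X) ?_)
          exact Nat.mul_le_mul_right _ hcard
        have hpow : r + 2^(2*r+1) ≤ 2^(2*r+2) * r := by
          have h1 : 2^(2*r+2) = 2 * 2^(2*r+1) := by ring
          have h2 : 2 ≤ 2^(2*r+1) := by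
            calc 2 = 2^1 := by norm_num
            _ ≤ 2^(2*r+1) := Nat.pow_le_pow_right (by norm_num) (by omega)
          nlinarith
        calc S0.card = _ + _ := hsplit.symm
        _ ≤ r * n.choose (r-3) + 2^(2*r+1) * n.choose (r-3) := Nat.add_le_add hf23 hrest
        _ = (r + 2^(2*r+1)) * n.choose (r-3) := by ring
        _ ≤ (2^(2*r+2) * r) * n.choose (r-3) := Nat.mul_le_mul_right _ hpow
      · -- X meets {2,3} : use two witness families
        have h23 : ∀ B ∈ 𝒜, 2 ∈ B ∨ 3 ∈ B := fun B hB => meets23 hsub hInt hbig hB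
        -- X \ {2,3} has at least two elements
        have hXc2 : 2 ≤ (X \ ({2,3} : Finset ℕ)).card := by
          have hsplitX := Finset.card_sdiff_add_card_inter X ({2,3} : Finset ℕ)
          have hc23 : ({2,3} : Finset ℕ).card = 2 := by decide
          have hle2 : (X ∩ ({2,3} : Finset ℕ)).card ≤ 2 := by
            refine le_trans (card_le_card inter_subset_right) (by decide)
          rcases hcond with h | ⟨h1, h2⟩ | ⟨h1, h2, h3⟩ | h1
          · omega
          · have : (X ∩ ({2,3} : Finset ℕ)).card ≤ 1 := by
              by_contra hc
              push_neg at hc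
              have he : X ∩ ({2,3} : Finset ℕ) = ({2,3} : Finset ℕ) :=
                Finset.eq_of_subset_of_card_le inter_subset_right (by omega)
              exact h2 (by rw [← he]; exact inter_subset_left)
            omega
          · exfalso
            apply hX23
            ext y
            simp only [mem_inter, mem_insert, mem_singleton, notMem_empty, iff_false, not_and]
            rintro hyX (h | h) <;> subst h
            · exact h2 hyX
            · exact h3 hyX
          · exfalso
            apply hX23
            ext y
            simp only [mem_inter, mem_insert, mem_singleton, notMem_empty, iff_false, not_and]
            intro hyX hy23
            have : y = x := by
              have := Finset.card_le_one.mp (le_of_eq h1) y hyX x hxX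
              exact this
            omega
        obtain ⟨a, haX, b, hbX, hab⟩ := Finset.one_lt_card.1 hXc2
        have haprop : a ∈ X ∧ a ≠ 2 ∧ a ≠ 3 := by
          obtain ⟨h1, h2⟩ := mem_sdiff.1 haX
          simp only [mem_insert, mem_singleton] at h2
          push_neg at h2
          exact ⟨h1, h2⟩
        have hbprop : b ∈ X ∧ b ≠ 2 ∧ b ≠ 3 := by
          obtain ⟨h1, h2⟩ := mem_sdiff.1 hbX
          simp only [mem_insert, mem_singleton] at h2
          push_neg at h2
          exact ⟨h1, h2⟩
        have ha4 : 4 ≤ a := by have := hX2 a haprop.1; omega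
        have hb4 : 4 ≤ b := by have := hX2 b hbprop.1; omega
        have han : a ≤ n := le_trans (Finset.le_sup (f := id) haprop.1) (by omega)
        have hbn : b ≤ n := le_trans (Finset.le_sup (f := id) hbprop.1) (by omega)
        -- generic construction of a witness family avoiding {2,3}
        have hwitness : ∀ (c : ℕ) (E : Finset ℕ), c ∈ X → 4 ≤ c → c ≤ n → c ∉ E →
            (∀ e ∈ E, 4 ≤ e) →
            ((Icc 4 n \ insert c E).powersetCard (r-2)).image
              (fun S => insert 1 (insert c S)) ⊆ ℰ ∧
            (((Icc 4 n \ insert c E).powersetCard (r-2)).image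
              (fun S => insert 1 (insert c S))).card =
              (Icc 4 n \ insert c E).card.choose (r-2) := by
          intro c E hcX hc4 hcn hcE hE4
          have hVelt : ∀ u ∈ Icc 4 n \ insert c E, 4 ≤ u ∧ u ≤ n ∧ u ≠ c := by
            intro u hu
            obtain ⟨h1, h2⟩ := mem_sdiff.1 hu
            simp only [mem_Icc] at h1
            simp only [mem_insert, not_or] at h2
            exact ⟨h1.1, h1.2, h2.1⟩
          constructor
          · intro B hB
            obtain ⟨S, hS, hBe⟩ := mem_image.1 hB
            obtain ⟨hSU, hScard⟩ := mem_powersetCard.1 hS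
            have hcS : c ∉ S := fun h => (hVelt _ (hSU h)).2.2 rfl
            have h1S : (1:ℕ) ∉ insert c S := by
              simp only [mem_insert]; push_neg
              exact ⟨by omega, fun h => by have := (hVelt _ (hSU h)).1; omega⟩
            have hBcard : B.card = r := by
              rw [← hBe, card_insert_of_notMem h1S, card_insert_of_notMem hcS, hScard]
              omega
            have hBIcc : B ⊆ Icc 1 n := by
              rw [← hBe]
              intro y hy
              simp only [mem_Icc]
              rcases mem_insert.1 hy with h | h
              · omega
              rcases mem_insert.1 h with h2 | h2
              · omega
              · have := hVelt _ (hSU h2); omega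
            have h1B : 1 ∈ B := by rw [← hBe]; exact mem_insert_self _ _
            have hBX : (B ∩ X).Nonempty :=
              ⟨c, mem_inter.2 ⟨by rw [← hBe]; exact mem_insert_of_mem (mem_insert_self _ _),
                hcX⟩⟩
            have hB23 : ¬ (2 ∈ B ∨ 3 ∈ B) := by
              rw [← hBe]
              rintro (h | h) <;>
              · rcases mem_insert.1 h with h2 | h2
                · omega
                rcases mem_insert.1 h2 with h3 | h3
                · omega
                · have := hVelt _ (hSU h3); omega
            have hBnotin : ¬ B ∈ 𝒜 := fun hB𝒜 => hB23 (h23 B hB𝒜)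
            exact mem_filter.2 ⟨hHSmem.2 ⟨⟨mem_uniform_iff.2 ⟨hBIcc, hBcard⟩, h1B⟩, hBX⟩,
              hBnotin⟩
          · refine insert_pair_card ?_ ?_ (by omega)
            · intro h; exact (hVelt _ h).2.2 rfl
            · intro h; have := (hVelt _ h).1; omega
        obtain ⟨hG1sub, hG1card⟩ := hwitness a ∅ haprop.1 ha4 han (notMem_empty a)
          (fun e he => absurd he (notMem_empty e))
        obtain ⟨hG2sub, hG2card⟩ := hwitness b {a} hbprop.1 hb4 hbn
          (by simp [Ne.symm hab]) (fun e he => by simp only [mem_singleton] at he; omega)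
        -- cardinalities of the ground sets
        have hV1card : (Icc 4 n \ insert a (∅ : Finset ℕ)).card = n - 4 := by
          rw [insert_empty_eq]
          rw [card_sdiff_of_subset (by simp [mem_Icc]; omega), Nat.card_Icc, card_singleton]
          omega
        have hV2card : (Icc 4 n \ insert b ({a} : Finset ℕ)).card = n - 5 := by
          rw [card_sdiff_of_subset ?_, Nat.card_Icc]
          · have : (insert b ({a} : Finset ℕ)).card = 2 := by
              rw [card_insert_of_notMem (by simp [Ne.symm hab]), card_singleton]
            rw [this]; omega
          · intro y hy
            simp only [mem_insert, mem_singleton] at hy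
            simp only [mem_Icc]
            rcases hy with h | h <;> omega
        -- disjointness of the two witness families
        have hdisjG : Disjoint
            (((Icc 4 n \ insert a (∅ : Finset ℕ)).powersetCard (r-2)).image
              (fun S => insert 1 (insert a S)))
            (((Icc 4 n \ insert b ({a} : Finset ℕ)).powersetCard (r-2)).image
              (fun S => insert 1 (insert b S))) := by
          rw [Finset.disjoint_left]
          intro B hB1 hB2
          obtain ⟨S, hS, hBe⟩ := mem_image.1 hB1
          obtain ⟨S', hS', hBe'⟩ := mem_image.1 hB2
          have haB : a ∈ B := by rw [← hBe]; exact mem_insert_of_mem (mem_insert_self _ _)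
          have : a ∉ B := by
            rw [← hBe']
            simp only [mem_insert, not_or]
            refine ⟨by omega, hab, fun h => ?_⟩
            have := (mem_sdiff.1 ((mem_powersetCard.1 hS').1 h)).2
            simp at this
          exact this haB
        -- LHS bounds
        have hf23C2 : (S0.filter (fun A => A ∩ Icc 1 (2*r+1) = ({2,3} : Finset ℕ))).card ≤
            (n - 5).choose (r-2) := by
          refine le_trans (class23_card hS0uni (by omega)) ?_
          exact Nat.choose_mono _ (by omega)
        have hrestC2 : (S0.filter (fun A => ¬ A ∩ Icc 1 (2*r+1) = ({2,3} : Finset ℕ))).card ≤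
            (n - 4).choose (r-2) := by
          refine le_trans hrest ?_
          have h2 := hN₃ n (by omega)
          rw [hr32] at h2
          refine le_trans ?_ h2
          refine Nat.mul_le_mul_right _ ?_
          calc 2^(2*r+1) ≤ 2^(2*r+2) := Nat.pow_le_pow_right (by norm_num) (by omega)
          _ ≤ 2^(2*r+2) * r := Nat.le_mul_of_pos_right _ (by omega)
        calc S0.card = _ + _ := hsplit.symm
        _ ≤ (n-5).choose (r-2) + (n-4).choose (r-2) := Nat.add_le_add hf23C2 hrestC2
        _ = (Icc 4 n \ insert b ({a} : Finset ℕ)).card.choose (r-2) +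
            (Icc 4 n \ insert a (∅ : Finset ℕ)).card.choose (r-2) := by
          rw [hV1card, hV2card]
        _ = _ + _ := by rw [← hG1card, ← hG2card]
        _ = ((((Icc 4 n \ insert a (∅ : Finset ℕ)).powersetCard (r-2)).image
              (fun S => insert 1 (insert a S))) ∪
            (((Icc 4 n \ insert b ({a} : Finset ℕ)).powersetCard (r-2)).image
              (fun S => insert 1 (insert b S)))).card := by
          rw [card_union_of_disjoint hdisjG]
          omega
        _ ≤ ℰ.card := card_le_card (union_subset hG1sub hG2sub)
    · -- small class : everything is an error term
      push_neg at hbig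
      apply hfin
      have hbound := fiberwise_bound hS0uni (r * n.choose (r-3)) ?_
      · calc S0.card ≤ 2^(2*r+1) * (r * n.choose (r-3)) := hbound
        _ = (2^(2*r+1) * r) * n.choose (r-3) := by ring
        _ ≤ (2^(2*r+2) * r) * n.choose (r-3) := by
          refine Nat.mul_le_mul_right _ (Nat.mul_le_mul_right _ ?_)
          exact Nat.pow_le_pow_right (by norm_num) (by omega)
      · intro T hT
        rcases Nat.lt_or_ge T.card 2 with h2 | h2
        · have hemp : S0.filter (fun A => A ∩ Icc 1 (2*r+1) = T) = ∅ := by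
            rw [Finset.filter_eq_empty_iff]
            intro A hA hAT
            have := hwin A hA
            rw [hAT] at this
            omega
          rw [hemp]
          simp
        rcases Nat.eq_or_lt_of_le h2 with h2e | h3
        · -- |T| = 2 : inject into the {2,3}-class
          have hmap : ∀ A ∈ S0.filter (fun A => A ∩ Icc 1 (2*r+1) = T),
              insert 2 (insert 3 (A \ Icc 1 (2*r+1))) ∈
                𝒜.filter (fun A => ¬ 1 ∈ A ∧ A ∩ Icc 1 (2*r+1) = {2,3}) := by
            intro A hA
            obtain ⟨hAS0, hAT⟩ := mem_filter.1 hA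
            obtain ⟨hA𝒜, h1A, _⟩ := hS0mem hAS0
            have hD : ∀ d ∈ A \ Icc 1 (2*r+1), d ∉ Icc 1 (2*r+1) :=
              fun d hd => (mem_sdiff.1 hd).2
            refine mem_filter.2 ⟨pair_normalize hsub hLC (by omega) hA𝒜 h1A
              (by rw [hAT]; omega), ?_, ?_⟩
            · exact normal_trace_one (by omega) hD
            · exact normal_trace_inter (by omega) hD
          have hinj : Set.InjOn (fun A => insert 2 (insert 3 (A \ Icc 1 (2*r+1))))
              (S0.filter (fun A => A ∩ Icc 1 (2*r+1) = T)) := by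
            intro A hA A' hA' he
            simp only [Finset.mem_coe] at hA hA'
            obtain ⟨hAS0, hAT⟩ := mem_filter.1 hA
            obtain ⟨hAS0', hAT'⟩ := mem_filter.1 hA'
            have hD : ∀ d ∈ A \ Icc 1 (2*r+1), d ∉ Icc 1 (2*r+1) :=
              fun d hd => (mem_sdiff.1 hd).2
            have hD' : ∀ d ∈ A' \ Icc 1 (2*r+1), d ∉ Icc 1 (2*r+1) :=
              fun d hd => (mem_sdiff.1 hd).2
            refine recover_eq hAT hAT' ?_
            have h1 := normal_trace_sdiff (r := r) (by omega) hD
            have h2 := normal_trace_sdiff (r := r) (by omega) hD'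
            rw [← h1, ← h2]
            exact congrArg (fun t => t \ Icc 1 (2*r+1)) he
          calc (S0.filter (fun A => A ∩ Icc 1 (2*r+1) = T)).card
              ≤ (𝒜.filter (fun A => ¬ 1 ∈ A ∧ A ∩ Icc 1 (2*r+1) = {2,3})).card :=
                Finset.card_le_card_of_injOn _ hmap hinj
          _ ≤ r * n.choose (r-3) := hbig
        · refine le_trans (fiber_card hS0uni T) ?_
          refine le_trans (choose_right_mono (m := n) (j := r - T.card) (k := r - 3)
            (by omega) (by omega)) ?_
          exact Nat.le_mul_of_pos_left _ (by omega)
  -- final assembly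
  have hsplitHA := Finset.card_filter_add_card_filter_not (s := hitting 𝒜 X)
    (p := fun A => 1 ∈ A)
  have hS1HS : S1 ⊆ hitting (star n r) X := by
    intro A hA
    obtain ⟨h1, h2⟩ := mem_filter.1 hA
    obtain ⟨h3, h4⟩ := hHAmem.1 h1
    exact hHSmem.2 ⟨⟨hsub h3, h2⟩, h4⟩
  have hdisj : Disjoint S1 ℰ := by
    rw [Finset.disjoint_left]
    intro A hA hAE
    exact (mem_filter.1 hAE).2 ((hHAmem.1 (mem_filter.1 hA).1).1)
  have hunion : S1.card + ℰ.card ≤ (hitting (star n r) X).card := by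
    rw [← card_union_of_disjoint hdisj]
    exact card_le_card (union_subset hS1HS (filter_subset _ _))
  rw [← hS1def, ← hS0def] at hsplitHA
  omega
end

section
/- Let r ≥ 3, n ≥ 2r, and let X = {i} with r + 2 ≤ i ≤ n be a singleton. Then for n sufficiently large, every left-compressed intersecting family 𝒜 ⊆ [n]^(r) satisfies |𝒜({i})| ≤ |𝒮({i})| = C(n−2, r−2), where 𝒮 is the star at 1. -/
open Finset

namespace Stmt19Aux

open Finset

/-- counting function: number of elements of `X` that are `≤ t`. -/
def cnt (X : Finset ℕ) (t : ℕ) : ℕ := (X.filter (· ≤ t)).card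

lemma cnt_mono (X : Finset ℕ) {t t' : ℕ} (h : t ≤ t') : cnt X t ≤ cnt X t' := by
  apply card_le_card
  intro x hx
  simp only [mem_filter] at hx ⊢
  exact ⟨hx.1, hx.2.trans h⟩

lemma cnt_le_card (X : Finset ℕ) (t : ℕ) : cnt X t ≤ X.card :=
  card_le_card (filter_subset _ _)

lemma cnt_zero {X : Finset ℕ} (h0 : 0 ∉ X) : cnt X 0 = 0 := by
  unfold cnt
  rw [card_eq_zero]
  ext x
  simp only [mem_filter, notMem_empty, iff_false, not_and, Nat.le_zero]
  rintro hx rfl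
  exact h0 hx

lemma cnt_succ (X : Finset ℕ) (t : ℕ) :
    cnt X (t + 1) = cnt X t + (if t + 1 ∈ X then 1 else 0) := by
  unfold cnt
  split_ifs with h
  · have he : X.filter (· ≤ t + 1) = insert (t + 1) (X.filter (· ≤ t)) := by
      ext x
      simp only [mem_filter, mem_insert]
      constructor
      · rintro ⟨hx, hle⟩
        rcases Nat.lt_or_ge x (t + 1) with h' | h'
        · exact Or.inr ⟨hx, by omega⟩
        · exact Or.inl (by omega)
      · rintro (rfl | ⟨hx, hle⟩)
        · exact ⟨h, le_rfl⟩
        · exact ⟨hx, by omega⟩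
    rw [he, card_insert_of_notMem]
    simp only [mem_filter]
    omega
  · have he : X.filter (· ≤ t + 1) = X.filter (· ≤ t) := by
      ext x
      simp only [mem_filter]
      constructor
      · rintro ⟨hx, hle⟩
        refine ⟨hx, ?_⟩
        rcases Nat.lt_or_ge x (t + 1) with h' | h'
        · omega
        · exfalso
          have hx' : x = t + 1 := by omega
          exact h (hx' ▸ hx)
      · rintro ⟨hx, hle⟩; exact ⟨hx, by omega⟩
    rw [he]
    omega

lemma eq_of_cnt {A B : Finset ℕ} (hA0 : 0 ∉ A) (hB0 : 0 ∉ B)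
    (h : ∀ t, cnt A t = cnt B t) : A = B := by
  ext x
  cases x with
  | zero => simp [hA0, hB0]
  | succ t =>
    have h1 := h (t + 1)
    rw [cnt_succ, cnt_succ, h t] at h1
    constructor
    · intro hx
      by_contra hc
      rw [if_pos hx, if_neg hc] at h1; omega
    · intro hx
      by_contra hc
      rw [if_neg hc, if_pos hx] at h1; omega

lemma comp_mem {𝒜 : Finset (Finset ℕ)} (hLC : LeftCompressed 𝒜) {A : Finset ℕ}
    (hA : A ∈ 𝒜) {c a : ℕ} (h1 : 1 ≤ c) (h2 : c < a) : comp c a A ∈ 𝒜 := by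
  by_contra h
  have hmem : comp c a A ∈ compFam c a 𝒜 :=
    mem_union_right _ (mem_image_of_mem _ (mem_filter.2 ⟨hA, h⟩))
  rw [hLC c a h1 h2] at hmem
  exact h hmem

end Stmt19Aux
namespace Stmt19Aux

open Finset

/-- one compression step towards `B`. -/
lemma dom_step {𝒜 : Finset (Finset ℕ)} (hLC : LeftCompressed 𝒜) {A B : Finset ℕ}
    (hA : A ∈ 𝒜) (h0 : 0 ∉ A) (hB0 : 0 ∉ B) (hAB : A ≠ B)
    (hcard : B.card = A.card) (hdom : ∀ t, cnt A t ≤ cnt B t) :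
    ∃ A', A' ∈ 𝒜 ∧ 0 ∉ A' ∧ B.card = A'.card ∧ (∀ t, cnt A' t ≤ cnt B t) ∧
      A'.sum id + 1 = A.sum id := by
  have hex : ∃ t, cnt A t < cnt B t := by
    by_contra hc
    push_neg at hc
    exact hAB (eq_of_cnt h0 hB0 (fun t => le_antisymm (hdom t) (hc t)))
  classical
  set t₀ := Nat.find hex with ht₀def
  have ht₀ : cnt A t₀ < cnt B t₀ := Nat.find_spec hex
  have hmin : ∀ t, t < t₀ → ¬ (cnt A t < cnt B t) := fun t ht => Nat.find_min hex ht
  have ht₀pos : 1 ≤ t₀ := by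
    by_contra hc
    have ht0 : t₀ = 0 := by omega
    rw [ht0] at ht₀
    have := cnt_zero hB0
    omega
  -- find the element a
  set F := A.filter (fun x => t₀ < x) with hFdef
  have hFne : F.Nonempty := by
    rw [Finset.nonempty_iff_ne_empty]
    intro hF
    have hall : ∀ x ∈ A, x ≤ t₀ := by
      intro x hx
      by_contra hc
      have : x ∈ F := mem_filter.2 ⟨hx, by omega⟩
      rw [hF] at this
      exact notMem_empty x this
    have h1 : cnt A t₀ = A.card := by
      unfold cnt
      rw [filter_true_of_mem hall]
    have h2 : cnt B t₀ ≤ B.card := cnt_le_card B t₀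
    omega
  set a := F.min' hFne with hadef
  have haF : a ∈ F := F.min'_mem hFne
  have haA : a ∈ A := (mem_filter.1 haF).1
  have hat₀ : t₀ < a := (mem_filter.1 haF).2
  have hamin : ∀ x ∈ A, t₀ < x → a ≤ x := fun x hx h => F.min'_le x (mem_filter.2 ⟨hx, h⟩)
  have ha1 : a - 1 ∉ A := by
    intro hmem
    rcases Nat.lt_or_ge t₀ (a - 1) with h | h
    · have := hamin (a - 1) hmem h
      omega
    · -- a - 1 = t₀, so t₀ ∈ A
      have hA_t₀ : t₀ ∈ A := by
        have : a - 1 = t₀ := by omega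
        rwa [this] at hmem
      obtain ⟨u, hu⟩ : ∃ u, t₀ = u + 1 := ⟨t₀ - 1, by omega⟩
      have e1 := cnt_succ A u
      have e2 := cnt_succ B u
      rw [← hu, if_pos hA_t₀] at e1
      rw [← hu] at e2
      have hb : (if t₀ ∈ B then 1 else 0) ≤ 1 := by split_ifs <;> omega
      have : cnt A u < cnt B u := by omega
      exact hmin u (by omega) this
  have ha2 : 2 ≤ a := by omega
  set A' := insert (a - 1) (A.erase a) with hA'def
  have hcomp : comp (a - 1) a A = A' := by
    rw [comp, if_pos ⟨haA, ha1⟩]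
  have hA' : A' ∈ 𝒜 := by
    have := comp_mem hLC hA (c := a - 1) (a := a) (by omega) (by omega)
    rwa [hcomp] at this
  have hnm : a - 1 ∉ A.erase a := fun h => ha1 (mem_of_mem_erase h)
  have h0' : 0 ∉ A' := by
    intro h
    rcases mem_insert.1 h with h | h
    · omega
    · exact h0 (mem_of_mem_erase h)
  have hcard' : B.card = A'.card := by
    rw [hA'def, card_insert_of_notMem hnm, card_erase_of_mem haA]
    have : 1 ≤ A.card := card_pos.2 ⟨a, haA⟩
    omega
  have hsum' : A'.sum id + 1 = A.sum id := by
    rw [hA'def, sum_insert hnm]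
    have := Finset.sum_erase_add A id haA
    simp only [id] at this ⊢
    omega
  -- key fact: A has no elements in (t₀, a)
  have hnoel : ∀ x ∈ A, x ≤ a - 1 → x ≤ t₀ := by
    intro x hx hle
    by_contra hc
    have := hamin x hx (by omega)
    omega
  have hdom' : ∀ t, cnt A' t ≤ cnt B t := by
    intro t
    rcases Nat.lt_trichotomy t (a - 1) with h | h | h
    · have he : A'.filter (· ≤ t) = A.filter (· ≤ t) := by
        rw [hA'def, filter_insert, if_neg (by omega), filter_erase]
        apply erase_eq_of_notMem
        simp only [mem_filter]
        rintro ⟨-, h'⟩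
        omega
      have : cnt A' t = cnt A t := by unfold cnt; rw [he]
      rw [this]; exact hdom t
    · -- t = a - 1
      have he : A'.filter (· ≤ t) = insert (a - 1) (A.filter (· ≤ t)) := by
        rw [hA'def, filter_insert, if_pos (by omega : a - 1 ≤ t), filter_erase]
        congr 1
        apply erase_eq_of_notMem
        simp only [mem_filter]
        rintro ⟨-, h'⟩
        omega
      have hnm2 : a - 1 ∉ A.filter (· ≤ t) := by
        simp only [mem_filter]
        rintro ⟨h', -⟩
        exact ha1 h'
      have e1 : cnt A' t = cnt A t + 1 := by
        unfold cnt; rw [he, card_insert_of_notMem hnm2]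
      -- cnt A t = cnt A t₀
      have e2 : A.filter (· ≤ t) = A.filter (· ≤ t₀) := by
        ext x
        simp only [mem_filter]
        constructor
        · rintro ⟨hx, hle⟩
          exact ⟨hx, hnoel x hx (by omega)⟩
        · rintro ⟨hx, hle⟩
          exact ⟨hx, by omega⟩
      have e3 : cnt A t = cnt A t₀ := by unfold cnt; rw [e2]
      have e4 : cnt B t₀ ≤ cnt B t := cnt_mono B (by omega)
      omega
    · -- a - 1 < t, so a ≤ t
      have haf : a ∈ A.filter (· ≤ t) := mem_filter.2 ⟨haA, by omega⟩
      have he : A'.filter (· ≤ t) = insert (a - 1) ((A.filter (· ≤ t)).erase a) := by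
        rw [hA'def, filter_insert, if_pos (by omega : a - 1 ≤ t), filter_erase]
      have hnm2 : a - 1 ∉ (A.filter (· ≤ t)).erase a := by
        intro h
        exact ha1 (mem_filter.1 (mem_of_mem_erase h)).1
      have e1 : cnt A' t = cnt A t := by
        unfold cnt
        rw [he, card_insert_of_notMem hnm2, card_erase_of_mem haf]
        have : 1 ≤ (A.filter (· ≤ t)).card := card_pos.2 ⟨a, haf⟩
        omega
      rw [e1]; exact hdom t
  exact ⟨A', hA', h0', hcard', hdom', hsum'⟩

lemma mem_of_dom_aux {𝒜 : Finset (Finset ℕ)} (hLC : LeftCompressed 𝒜) {B : Finset ℕ}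
    (hB0 : 0 ∉ B) :
    ∀ s (A : Finset ℕ), A.sum id ≤ s → A ∈ 𝒜 → 0 ∉ A → B.card = A.card →
      (∀ t, cnt A t ≤ cnt B t) → B ∈ 𝒜 := by
  intro s
  induction s with
  | zero =>
    intro A hs hA h0 hcard hdom
    by_cases hAB : A = B
    · exact hAB ▸ hA
    · obtain ⟨A', -, -, -, -, hsum⟩ := dom_step hLC hA h0 hB0 hAB hcard hdom
      omega
  | succ s ih =>
    intro A hs hA h0 hcard hdom
    by_cases hAB : A = B
    · exact hAB ▸ hA
    · obtain ⟨A', hA', h0', hcard', hdom', hsum⟩ := dom_step hLC hA h0 hB0 hAB hcard hdom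
      exact ih A' (by omega) hA' h0' hcard' hdom'

/-- Left-compressed families are closed under the domination order. -/
lemma mem_of_dom {𝒜 : Finset (Finset ℕ)} (hLC : LeftCompressed 𝒜) {A B : Finset ℕ}
    (hA : A ∈ 𝒜) (h0 : 0 ∉ A) (hB0 : 0 ∉ B) (hcard : B.card = A.card)
    (hdom : ∀ t, cnt A t ≤ cnt B t) : B ∈ 𝒜 :=
  mem_of_dom_aux hLC hB0 (A.sum id) A le_rfl hA h0 hcard hdom

end Stmt19Aux
namespace Stmt19Aux

open Finset

lemma self_cond {𝒜 : Finset (Finset ℕ)} (hLC : LeftCompressed 𝒜)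
    (hInt : IsIntersecting 𝒜) {A : Finset ℕ} {r : ℕ}
    (hA : A ∈ 𝒜) (hcard : A.card = r) (h0 : 0 ∉ A) :
    ∃ t, t + 1 ≤ 2 * cnt A t := by
  by_contra hc
  push_neg at hc
  have hc' : ∀ t, 2 * cnt A t ≤ t := fun t => by have := hc t; omega
  set B1 := (range r).image (fun k => 2 * k + 1) with hB1def
  set B2 := (range r).image (fun k => 2 * k + 2) with hB2def
  have hinj1 : Function.Injective (fun k : ℕ => 2 * k + 1) := by
    intro a b h
    have h' : 2 * a + 1 = 2 * b + 1 := h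
    omega
  have hinj2 : Function.Injective (fun k : ℕ => 2 * k + 2) := by
    intro a b h
    have h' : 2 * a + 2 = 2 * b + 2 := h
    omega
  have hB1card : B1.card = r := by
    rw [hB1def, card_image_of_injective _ hinj1, card_range]
  have hB2card : B2.card = r := by
    rw [hB2def, card_image_of_injective _ hinj2, card_range]
  have h0B1 : (0 : ℕ) ∉ B1 := by
    simp only [hB1def, mem_image]
    rintro ⟨k, -, h⟩; omega
  have h0B2 : (0 : ℕ) ∉ B2 := by
    simp only [hB2def, mem_image]
    rintro ⟨k, -, h⟩; omega
  have key : ∀ t, cnt A t ≤ min r (t / 2) := by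
    intro t
    refine le_min ?_ ?_
    · rw [← hcard]; exact cnt_le_card A t
    · have := hc' t; omega
  have hcnt1 : ∀ t, cnt A t ≤ cnt B1 t := by
    intro t
    refine (key t).trans ?_
    have hsub : (range (min r (t / 2))).image (fun k => 2 * k + 1) ⊆ B1.filter (· ≤ t) := by
      intro y hy
      obtain ⟨k, hk, rfl⟩ := mem_image.1 hy
      rw [mem_range] at hk
      refine mem_filter.2 ⟨mem_image_of_mem _ (mem_range.2 (by omega)), ?_⟩
      show 2 * k + 1 ≤ t
      omega
    calc min r (t / 2) = ((range (min r (t / 2))).image (fun k => 2 * k + 1)).card := by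
          rw [card_image_of_injective _ hinj1, card_range]
      _ ≤ (B1.filter (· ≤ t)).card := card_le_card hsub
  have hcnt2 : ∀ t, cnt A t ≤ cnt B2 t := by
    intro t
    refine (key t).trans ?_
    have hsub : (range (min r (t / 2))).image (fun k => 2 * k + 2) ⊆ B2.filter (· ≤ t) := by
      intro y hy
      obtain ⟨k, hk, rfl⟩ := mem_image.1 hy
      rw [mem_range] at hk
      refine mem_filter.2 ⟨mem_image_of_mem _ (mem_range.2 (by omega)), ?_⟩
      show 2 * k + 2 ≤ t
      omega
    calc min r (t / 2) = ((range (min r (t / 2))).image (fun k => 2 * k + 2)).card := by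
          rw [card_image_of_injective _ hinj2, card_range]
      _ ≤ (B2.filter (· ≤ t)).card := card_le_card hsub
  have hB1mem : B1 ∈ 𝒜 := mem_of_dom hLC hA h0 h0B1 (by omega) hcnt1
  have hB2mem : B2 ∈ 𝒜 := mem_of_dom hLC hA h0 h0B2 (by omega) hcnt2
  have hdisj : B1 ∩ B2 = ∅ := by
    rw [eq_empty_iff_forall_notMem]
    intro y hy
    rw [mem_inter] at hy
    obtain ⟨k1, -, h1⟩ := mem_image.1 hy.1
    obtain ⟨k2, -, h2⟩ := mem_image.1 hy.2
    omega
  have := hInt B1 hB1mem B2 hB2mem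
  rw [hdisj] at this
  exact not_nonempty_empty this

lemma two_small {𝒜 : Finset (Finset ℕ)} {n r i : ℕ} (hLC : LeftCompressed 𝒜)
    (hInt : IsIntersecting 𝒜) (hsub : 𝒜 ⊆ uniformOn n r) (hr : 3 ≤ r)
    (hi : r + 2 ≤ i) {A : Finset ℕ} (hA : A ∈ 𝒜) (h1 : 1 ∉ A) (_hiA : i ∈ A) :
    ∃ x ∈ A, ∃ y ∈ A, x ≠ y ∧ x ≠ i ∧ y ≠ i ∧
      2 ≤ x ∧ x ≤ 2 * r - 1 ∧ 2 ≤ y ∧ y ≤ 2 * r - 1 := by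
  have hmem := hsub hA
  rw [uniformOn, mem_powersetCard] at hmem
  obtain ⟨hAsub, hAcard⟩ := hmem
  have hge1 : ∀ x ∈ A, 1 ≤ x := fun x hx => (mem_Icc.1 (hAsub hx)).1
  have h0 : 0 ∉ A := fun h => by have := hge1 0 h; omega
  obtain ⟨t, ht⟩ := self_cond hLC hInt hA hAcard h0
  set c := cnt A t with hcdef
  have hcr : c ≤ r := hAcard ▸ cnt_le_card A t
  set P := A.filter (fun y => y ≤ t ∧ y ≠ i) with hPdef
  have hPcard : 2 ≤ P.card := by
    by_cases hit : i ≤ t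
    · have hc3 : 3 ≤ c := by omega
      have hsub2 : A.filter (· ≤ t) ⊆ insert i P := by
        intro y hy
        obtain ⟨hy1, hy2⟩ := mem_filter.1 hy
        by_cases hyi : y = i
        · exact mem_insert.2 (Or.inl hyi)
        · exact mem_insert.2 (Or.inr (mem_filter.2 ⟨hy1, hy2, hyi⟩))
      have := card_le_card hsub2
      have := card_insert_le i P
      have : c ≤ P.card + 1 := by
        calc c ≤ (insert i P).card := card_le_card hsub2
          _ ≤ P.card + 1 := card_insert_le i P
      omega
    · have hc2 : 2 ≤ c := by
        by_contra hcc
        have ht1 : t ≤ 1 := by omega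
        have : A.filter (· ≤ t) = ∅ := by
          rw [eq_empty_iff_forall_notMem]
          intro y hy
          obtain ⟨hy1, hy2⟩ := mem_filter.1 hy
          have := hge1 y hy1
          have hy1' : y = 1 := by omega
          exact h1 (hy1' ▸ hy1)
        have : c = 0 := by rw [hcdef, cnt, this, card_empty]
        omega
      have hsub2 : A.filter (· ≤ t) ⊆ P := by
        intro y hy
        obtain ⟨hy1, hy2⟩ := mem_filter.1 hy
        exact mem_filter.2 ⟨hy1, hy2, by omega⟩
      have : c ≤ P.card := card_le_card hsub2
      omega
  obtain ⟨x, hx, y, hy, hxy⟩ := one_lt_card.1 (by omega : 1 < P.card)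
  obtain ⟨hxA, hxt, hxi⟩ := mem_filter.1 hx
  obtain ⟨hyA, hyt, hyi⟩ := mem_filter.1 hy
  have hx1 : x ≠ 1 := fun h => h1 (h ▸ hxA)
  have hy1 : y ≠ 1 := fun h => h1 (h ▸ hyA)
  have hxg := hge1 x hxA
  have hyg := hge1 y hyA
  exact ⟨x, hxA, y, hyA, hxy, hxi, hyi, by omega, by omega, by omega, by omega⟩

end Stmt19Aux
namespace Stmt19Aux

open Finset

lemma erase_insert_pair {i : ℕ} (hi1 : i ≠ 1) {T : Finset ℕ} (h1T : 1 ∉ T) (hiT : i ∉ T) :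
    ((insert 1 (insert i T)).erase 1).erase i = T := by
  rw [erase_insert (by simp [Ne.symm hi1, h1T]), erase_insert hiT]

lemma image_insert_card (G : Finset ℕ) (i k : ℕ) (h1 : 1 ∉ G) (hiG : i ∉ G) (hi1 : i ≠ 1) :
    ((G.powersetCard k).image (fun R => insert 1 (insert i R))).card = Nat.choose G.card k := by
  rw [card_image_of_injOn, card_powersetCard]
  intro R hR S hS hEq
  rw [Finset.mem_coe, mem_powersetCard] at hR hS
  have hR1 : 1 ∉ R := fun h => h1 (hR.1 h)
  have hRi : i ∉ R := fun h => hiG (hR.1 h)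
  have hS1 : 1 ∉ S := fun h => h1 (hS.1 h)
  have hSi : i ∉ S := fun h => hiG (hS.1 h)
  calc R = ((insert 1 (insert i R)).erase 1).erase i := (erase_insert_pair hi1 hR1 hRi).symm
    _ = ((insert 1 (insert i S)).erase 1).erase i := by
        have hEq' : insert 1 (insert i R) = insert 1 (insert i S) := hEq
        rw [hEq']
    _ = S := erase_insert_pair hi1 hS1 hSi

lemma inter_singleton_nonempty {A : Finset ℕ} {i : ℕ} :
    (A ∩ {i}).Nonempty ↔ i ∈ A := by
  constructor
  · rintro ⟨x, hx⟩
    rw [mem_inter, mem_singleton] at hx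
    exact hx.2 ▸ hx.1
  · intro h
    exact ⟨i, mem_inter.2 ⟨h, mem_singleton_self i⟩⟩

lemma star_eq (n r i : ℕ) (hr : 2 ≤ r) (hi5 : 2 ≤ i) (hin : i ≤ n) :
    (uniformOn n r).filter (fun A => 1 ∈ A ∧ i ∈ A) =
      ((((Icc 1 n).erase 1).erase i).powersetCard (r - 2)).image
        (fun R => insert 1 (insert i R)) := by
  have hi1 : i ≠ 1 := by omega
  ext A
  simp only [mem_filter, mem_image, mem_powersetCard, uniformOn]
  constructor
  · rintro ⟨⟨hAsub, hAcard⟩, h1A, hiA⟩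
    refine ⟨(A.erase 1).erase i, ⟨?_, ?_⟩, ?_⟩
    · intro x hx
      have hxi := mem_erase.1 hx
      have hx1 := mem_erase.1 hxi.2
      exact mem_erase.2 ⟨hxi.1, mem_erase.2 ⟨hx1.1, hAsub hx1.2⟩⟩
    · rw [card_erase_of_mem (mem_erase.2 ⟨hi1, hiA⟩), card_erase_of_mem h1A, hAcard]
      omega
    · rw [insert_erase (mem_erase.2 ⟨hi1, hiA⟩), insert_erase h1A]
  · rintro ⟨R, ⟨hRsub, hRcard⟩, rfl⟩
    have hR1 : 1 ∉ R := fun h => by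
      have := mem_erase.1 (mem_erase.1 (hRsub h)).2
      exact this.1 rfl
    have hRi : i ∉ R := fun h => (mem_erase.1 (hRsub h)).1 rfl
    have h1ins : (1 : ℕ) ∉ insert i R := by simp [Ne.symm hi1, hR1]
    refine ⟨⟨?_, ?_⟩, mem_insert_self 1 _, mem_insert.2 (Or.inr (mem_insert_self i R))⟩
    · intro x hx
      rcases mem_insert.1 hx with rfl | hx'
      · exact mem_Icc.2 ⟨le_rfl, by omega⟩
      · rcases mem_insert.1 hx' with rfl | hx''
        · exact mem_Icc.2 ⟨by omega, hin⟩
        · exact (mem_erase.1 (mem_erase.1 (hRsub hx'')).2).2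
    · rw [card_insert_of_notMem h1ins, card_insert_of_notMem hRi, hRcard]
      omega

lemma star_card (n r i : ℕ) (hr : 2 ≤ r) (hi5 : 2 ≤ i) (hin : i ≤ n) :
    ((uniformOn n r).filter (fun A => 1 ∈ A ∧ i ∈ A)).card = Nat.choose (n - 2) (r - 2) := by
  have hi1 : i ≠ 1 := by omega
  have h1mem : (1 : ℕ) ∈ Icc 1 n := mem_Icc.2 ⟨le_rfl, by omega⟩
  have himem : i ∈ (Icc 1 n).erase 1 := mem_erase.2 ⟨hi1, mem_Icc.2 ⟨by omega, hin⟩⟩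
  rw [star_eq n r i hr hi5 hin, image_insert_card _ _ _ (by simp) (by simp) hi1]
  congr 1
  rw [card_erase_of_mem himem, card_erase_of_mem h1mem, Nat.card_Icc]
  omega

lemma choose_double (k m : ℕ) (hm : 2 * k + 2 ≤ m) :
    ∀ t, Nat.choose (m + t) k ≤ 2 ^ t * Nat.choose m k := by
  rcases Nat.eq_zero_or_pos k with rfl | hk
  · intro t
    simp [Nat.one_le_two_pow]
  · obtain ⟨k', rfl⟩ : ∃ k', k = k' + 1 := ⟨k - 1, by omega⟩
    intro t
    induction t with
    | zero => simp
    | succ t ih =>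
      have h1 : m + (t + 1) = (m + t) + 1 := by omega
      rw [h1, Nat.choose_succ_succ]
      have h2 : Nat.choose (m + t) k' ≤ Nat.choose (m + t) (k' + 1) := by
        apply Nat.choose_le_succ_of_lt_half_left
        omega
      calc Nat.choose (m + t) k' + Nat.choose (m + t) (k' + 1)
          ≤ 2 * Nat.choose (m + t) (k' + 1) := by omega
        _ ≤ 2 * (2 ^ t * Nat.choose m (k' + 1)) := by omega
        _ = 2 ^ (t + 1) * Nat.choose m (k' + 1) := by ring

end Stmt19Aux
open Stmt19Aux in
theorem stmt19 (r i : ℕ) (hr : 3 ≤ r) (hi : r + 2 ≤ i) :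
    ∃ N : ℕ, 2 * r ≤ N ∧ ∀ n : ℕ, N ≤ n → i ≤ n →
      (hitting (star n r) {i}).card = Nat.choose (n - 2) (r - 2) ∧
      ∀ 𝒜 : Finset (Finset ℕ), 𝒜 ⊆ uniformOn n r → LeftCompressed 𝒜 →
        IsIntersecting 𝒜 → (hitting 𝒜 {i}).card ≤ Nat.choose (n - 2) (r - 2) := by
  set K := 2 ^ (2 * r + 1) * (8 * r * r * r) with hKdef
  refine ⟨K + 8 * r + i + 8, by omega, ?_⟩
  intro n hn hin
  have hstar : (hitting (star n r) {i}) =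
      (uniformOn n r).filter (fun A => 1 ∈ A ∧ i ∈ A) := by
    have hs : star n r = (uniformOn n r).filter (fun A => 1 ∈ A) := rfl
    rw [hitting, hs, filter_filter]
    apply filter_congr
    intro A _
    simp only [inter_singleton_nonempty]
  have hSicard : ((uniformOn n r).filter (fun A => 1 ∈ A ∧ i ∈ A)).card =
      Nat.choose (n - 2) (r - 2) := star_card n r i (by omega) (by omega) hin
  refine ⟨by rw [hstar, hSicard], ?_⟩
  intro 𝒜 hsub hLC hInt
  classical
  set T := hitting 𝒜 {i} with hTdef
  have hTmem : ∀ A, A ∈ T ↔ A ∈ 𝒜 ∧ i ∈ A := by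
    intro A
    rw [hTdef, hitting, mem_filter, inter_singleton_nonempty]
  set T₁ := T.filter (fun A => 1 ∈ A) with hT1def
  set T₂ := T.filter (fun A => ¬ 1 ∈ A) with hT2def
  have hsplit : T₁.card + T₂.card = T.card :=
    card_filter_add_card_filter_not (fun A => 1 ∈ A)
  set Si := (uniformOn n r).filter (fun A => 1 ∈ A ∧ i ∈ A) with hSidef
  have hT1sub : T₁ ⊆ Si := by
    intro A hA
    obtain ⟨hAT, h1A⟩ := mem_filter.1 hA
    obtain ⟨hA𝒜, hiA⟩ := (hTmem A).1 hAT
    exact mem_filter.2 ⟨hsub hA𝒜, h1A, hiA⟩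
  by_cases hT2e : T₂ = ∅
  · have h0 : T₂.card = 0 := by rw [hT2e, card_empty]
    have h1 : T.card = T₁.card := by omega
    rw [h1, ← hSicard]
    exact card_le_card hT1sub
  · obtain ⟨A₀, hA₀T⟩ := nonempty_iff_ne_empty.2 hT2e
    obtain ⟨hA₀T', h1A₀⟩ := mem_filter.1 hA₀T
    obtain ⟨hA₀𝒜, hiA₀⟩ := (hTmem A₀).1 hA₀T'
    have hA₀u := hsub hA₀𝒜
    rw [uniformOn, mem_powersetCard] at hA₀u
    obtain ⟨hA₀sub, hA₀card⟩ := hA₀u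
    -- choose the small element x ∉ A₀ with 2 ≤ x ≤ r + 2
    have hxex : (Icc 2 (r + 2) \ A₀).Nonempty := by
      apply card_pos.1
      have h1 : (Icc 2 (r + 2)).card = r + 1 := by rw [Nat.card_Icc]; omega
      have h2 := le_card_sdiff A₀ (Icc 2 (r + 2))
      omega
    obtain ⟨x, hx⟩ := hxex
    obtain ⟨hxI, hxA₀⟩ := mem_sdiff.1 hx
    obtain ⟨hx2, hxr2⟩ := mem_Icc.1 hxI
    have hx1 : x ≠ 1 := by omega
    -- choose rest
    obtain ⟨rest, hrsub, hrcard⟩ :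
        ∃ rest ⊆ (((Icc 1 (2 * r)) \ A₀).erase 1).erase x, rest.card = r - 2 := by
      apply exists_subset_card_eq
      have h1 : (Icc 1 (2 * r)).card = 2 * r := by rw [Nat.card_Icc]; omega
      have h2 := le_card_sdiff A₀ (Icc 1 (2 * r))
      have e1 := pred_card_le_card_erase (s := (Icc 1 (2 * r)) \ A₀) (a := 1)
      have e2 := pred_card_le_card_erase (s := ((Icc 1 (2 * r)) \ A₀).erase 1) (a := x)
      omega
    have hrest' : ∀ y ∈ rest, y ≠ 1 ∧ y ≠ x ∧ 1 ≤ y ∧ y ≤ 2 * r ∧ y ∉ A₀ := by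
      intro y hy
      have h1 := mem_erase.1 (hrsub hy)
      have h2 := mem_erase.1 h1.2
      have h3 := mem_sdiff.1 h2.2
      have h4 := mem_Icc.1 h3.1
      exact ⟨h2.1, h1.1, h4.1, h4.2, h3.2⟩
    set M := insert 1 (insert x rest) with hMdef
    have h1ins : (1 : ℕ) ∉ insert x rest := by
      simp only [mem_insert]
      rintro (h | h)
      · exact hx1 h.symm
      · exact (hrest' 1 h).1 rfl
    have hxrest : x ∉ rest := fun h => (hrest' x h).2.1 rfl
    have hMcard : M.card = r := by
      rw [hMdef, card_insert_of_notMem h1ins, card_insert_of_notMem hxrest, hrcard]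
      omega
    have hMbd : ∀ y ∈ M, 1 ≤ y ∧ y ≤ 2 * r := by
      intro y hy
      rcases mem_insert.1 hy with rfl | hy'
      · omega
      · rcases mem_insert.1 hy' with rfl | hy''
        · omega
        · have := hrest' y hy''
          exact ⟨this.2.2.1, this.2.2.2.1⟩
    have hMA₀ : ∀ y ∈ M, y ∉ A₀ := by
      intro y hy
      rcases mem_insert.1 hy with rfl | hy'
      · exact h1A₀
      · rcases mem_insert.1 hy' with rfl | hy''
        · exact hxA₀
        · exact (hrest' y hy'').2.2.2.2
    have h0M : (0 : ℕ) ∉ M := fun h => by have := hMbd 0 h; omega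
    -- the witness family W
    set G₂ := (Icc (2 * r + 1) n).erase i with hG2def
    have h1G₂ : (1 : ℕ) ∉ G₂ := by
      intro h
      have := mem_Icc.1 (mem_of_mem_erase h)
      omega
    have hiG₂ : i ∉ G₂ := fun h => (mem_erase.1 h).1 rfl
    set W := (G₂.powersetCard (r - 2)).image (fun R => insert 1 (insert i R)) with hWdef
    have hWcard : W.card = Nat.choose G₂.card (r - 2) :=
      image_insert_card G₂ i (r - 2) h1G₂ hiG₂ (by omega)
    have hG₂card : n - 2 * r - 1 ≤ G₂.card := by
      rw [hG2def]
      have h1 : (Icc (2 * r + 1) n).card = n - 2 * r := by rw [Nat.card_Icc]; omega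
      have h2 := pred_card_le_card_erase (s := Icc (2 * r + 1) n) (a := i)
      omega
    have hRfacts : ∀ R ∈ G₂.powersetCard (r - 2),
        (∀ y ∈ R, 2 * r + 1 ≤ y ∧ y ≤ n ∧ y ≠ i) ∧ 1 ∉ R ∧ i ∉ R ∧
          (1 : ℕ) ∉ insert i R ∧ (insert 1 (insert i R)).card = r := by
      intro R hR
      rw [mem_powersetCard] at hR
      obtain ⟨hRsub, hRcard⟩ := hR
      have hbd : ∀ y ∈ R, 2 * r + 1 ≤ y ∧ y ≤ n ∧ y ≠ i := by
        intro y hy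
        have h1 := mem_erase.1 (hRsub hy)
        have h2 := mem_Icc.1 h1.2
        exact ⟨h2.1, h2.2, h1.1⟩
      have h1R : 1 ∉ R := fun h => by have := hbd 1 h; omega
      have hiR : i ∉ R := fun h => (hbd i h).2.2 rfl
      have h1ins2 : (1 : ℕ) ∉ insert i R := by
        simp only [mem_insert]
        rintro (h | h)
        · omega
        · exact h1R h
      refine ⟨hbd, h1R, hiR, h1ins2, ?_⟩
      rw [card_insert_of_notMem h1ins2, card_insert_of_notMem hiR, hRcard]
      omega
    have hWSi : W ⊆ Si := by
      intro D hD
      obtain ⟨R, hR, rfl⟩ := mem_image.1 hD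
      obtain ⟨hbd, h1R, hiR, h1ins2, hcardD⟩ := hRfacts R hR
      refine mem_filter.2 ⟨?_, mem_insert_self _ _, mem_insert.2 (Or.inr (mem_insert_self _ _))⟩
      rw [uniformOn, mem_powersetCard]
      refine ⟨?_, hcardD⟩
      intro y hy
      rcases mem_insert.1 hy with rfl | hy'
      · exact mem_Icc.2 ⟨le_rfl, by omega⟩
      · rcases mem_insert.1 hy' with rfl | hy''
        · exact mem_Icc.2 ⟨by omega, hin⟩
        · have := hbd y hy''
          exact mem_Icc.2 ⟨by omega, this.2.1⟩
    have hW𝒜 : ∀ D ∈ W, D ∉ 𝒜 := by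
      intro D hD hD𝒜
      obtain ⟨R, hR, rfl⟩ := mem_image.1 hD
      obtain ⟨hbd, h1R, hiR, h1ins2, hcardD⟩ := hRfacts R hR
      have hdom : ∀ t, cnt (insert 1 (insert i R)) t ≤ cnt M t := by
        intro t
        rcases le_or_gt (2 * r) t with h2r | h2r
        · have hMt : cnt M t = r := by
            unfold Stmt19Aux.cnt
            rw [filter_true_of_mem (fun y hy => le_trans (hMbd y hy).2 h2r)]
            exact hMcard
          rw [hMt]
          calc cnt (insert 1 (insert i R)) t ≤ (insert 1 (insert i R)).card :=
                cnt_le_card _ t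
            _ = r := hcardD
        · rcases Nat.lt_or_ge t 1 with ht0 | ht1
          · have h0D : (0 : ℕ) ∉ insert 1 (insert i R) := by
              simp only [mem_insert]
              rintro (h | h | h)
              · omega
              · omega
              · have := hbd 0 h; omega
            have ht00 : t = 0 := by omega
            rw [ht00, cnt_zero h0D]
            exact Nat.zero_le _
          · rcases Nat.lt_or_ge t i with hti | hti
            · have hDs : (insert 1 (insert i R)).filter (· ≤ t) ⊆ {1} := by
                intro y hy
                obtain ⟨hy1, hy2⟩ := mem_filter.1 hy
                rcases mem_insert.1 hy1 with rfl | hy'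
                · exact mem_singleton_self 1
                · rcases mem_insert.1 hy' with rfl | hy''
                  · exfalso; omega
                  · exfalso; have := hbd y hy''; omega
              have h1f : (1 : ℕ) ∈ M.filter (· ≤ t) :=
                mem_filter.2 ⟨mem_insert_self _ _, ht1⟩
              calc cnt (insert 1 (insert i R)) t ≤ ({1} : Finset ℕ).card :=
                    card_le_card hDs
                _ = 1 := card_singleton 1
                _ ≤ cnt M t := card_pos.2 ⟨1, h1f⟩
            · have hDs : (insert 1 (insert i R)).filter (· ≤ t) ⊆ {1, i} := by
                intro y hy
                obtain ⟨hy1, hy2⟩ := mem_filter.1 hy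
                rcases mem_insert.1 hy1 with rfl | hy'
                · exact mem_insert_self _ _
                · rcases mem_insert.1 hy' with rfl | hy''
                  · exact mem_insert.2 (Or.inr (mem_singleton_self _))
                  · exfalso; have := hbd y hy''; omega
              have hMs : ({1, x} : Finset ℕ) ⊆ M.filter (· ≤ t) := by
                intro y hy
                rcases mem_insert.1 hy with rfl | hy'
                · exact mem_filter.2 ⟨mem_insert_self _ _, ht1⟩
                · rw [mem_singleton] at hy'
                  subst hy'
                  exact mem_filter.2 ⟨mem_insert.2 (Or.inr (mem_insert_self _ _)), by omega⟩
              have hc1 : ({1, i} : Finset ℕ).card ≤ 2 := by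
                apply le_trans (card_insert_le _ _)
                simp
              have hc2 : ({1, x} : Finset ℕ).card = 2 := by
                rw [card_insert_of_notMem (notMem_singleton.2 (Ne.symm hx1)), card_singleton]
              calc cnt (insert 1 (insert i R)) t ≤ ({1, i} : Finset ℕ).card :=
                    card_le_card hDs
                _ ≤ 2 := hc1
                _ = ({1, x} : Finset ℕ).card := hc2.symm
                _ ≤ cnt M t := card_le_card hMs
      have h0D : (0 : ℕ) ∉ insert 1 (insert i R) := by
        simp only [mem_insert]
        rintro (h | h | h)
        · omega
        · omega
        · have := hbd 0 h; omega
      have hM𝒜 : M ∈ 𝒜 :=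
        mem_of_dom hLC hD𝒜 h0D h0M (by rw [hMcard, hcardD]) hdom
      obtain ⟨y, hy⟩ := hInt M hM𝒜 A₀ hA₀𝒜
      rw [mem_inter] at hy
      exact hMA₀ y hy.1 hy.2
    have hdisj : Disjoint T₁ W := by
      rw [disjoint_left]
      intro A hA hAW
      obtain ⟨hAT, -⟩ := mem_filter.1 hA
      exact hW𝒜 A hAW ((hTmem A).1 hAT).1
    have hcard1 : T₁.card + W.card ≤ Nat.choose (n - 2) (r - 2) := by
      rw [← card_union_of_disjoint hdisj, ← hSicard]
      exact card_le_card (union_subset hT1sub hWSi)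
    -- bound on T₂
    set P2 := (Icc 2 (2 * r - 1)) ×ˢ (Icc 2 (2 * r - 1)) with hP2def
    set fprop : ℕ × ℕ → Finset (Finset ℕ) := fun p => (uniformOn n r).filter
        (fun A => p.1 ∈ A ∧ p.2 ∈ A ∧ i ∈ A ∧ p.1 ≠ p.2 ∧ p.1 ≠ i ∧ p.2 ≠ i) with hfdef
    have hT2sub : T₂ ⊆ P2.biUnion fprop := by
      intro A hA
      obtain ⟨hAT, h1A⟩ := mem_filter.1 hA
      obtain ⟨hA𝒜, hiA⟩ := (hTmem A).1 hAT
      obtain ⟨xx, hxx, yy, hyy, hne, hxi', hyi', hx2', hxb, hy2', hyb⟩ :=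
        two_small hLC hInt hsub hr hi hA𝒜 h1A hiA
      refine mem_biUnion.2 ⟨(xx, yy), mem_product.2
        ⟨mem_Icc.2 ⟨hx2', hxb⟩, mem_Icc.2 ⟨hy2', hyb⟩⟩, ?_⟩
      exact mem_filter.2 ⟨hsub hA𝒜, hxx, hyy, hiA, hne, hxi', hyi'⟩
    have hbound : ∀ p ∈ P2, (fprop p).card ≤ Nat.choose n (r - 3) := by
      intro p _
      have hgoal : Nat.choose n (r - 3) = ((Icc 1 n).powersetCard (r - 3)).card := by
        rw [card_powersetCard, Nat.card_Icc, Nat.add_sub_cancel]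
      rw [hgoal]
      apply card_le_card_of_injOn (fun A => ((A.erase p.1).erase p.2).erase i)
      · intro A hA
        obtain ⟨hAu, h1, h2, h3, h4, h5, h6⟩ := mem_filter.1 hA
        rw [uniformOn, mem_powersetCard] at hAu
        rw [Finset.mem_coe, mem_powersetCard]
        constructor
        · intro y hy
          exact hAu.1 (mem_of_mem_erase (mem_of_mem_erase (mem_of_mem_erase hy)))
        · have hm1 : i ∈ (A.erase p.1).erase p.2 :=
            mem_erase.2 ⟨Ne.symm h6, mem_erase.2 ⟨Ne.symm h5, h3⟩⟩
          have hm2 : p.2 ∈ A.erase p.1 := mem_erase.2 ⟨Ne.symm h4, h2⟩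
          rw [card_erase_of_mem hm1, card_erase_of_mem hm2, card_erase_of_mem h1, hAu.2]
          omega
      · intro A hA B hB hEq
        rw [Finset.mem_coe] at hA hB
        obtain ⟨-, hA1, hA2, hA3, hA4, hA5, hA6⟩ := mem_filter.1 hA
        obtain ⟨-, hB1, hB2, hB3, hB4, hB5, hB6⟩ := mem_filter.1 hB
        have hrec : ∀ C : Finset ℕ, p.1 ∈ C → p.2 ∈ C → i ∈ C → p.1 ≠ p.2 → p.1 ≠ i →
            p.2 ≠ i → insert p.1 (insert p.2 (insert i (((C.erase p.1).erase p.2).erase i))) = C := by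
          intro C h1 h2 h3 h4 h5 h6
          rw [insert_erase (mem_erase.2 ⟨Ne.symm h6, mem_erase.2 ⟨Ne.symm h5, h3⟩⟩),
            insert_erase (mem_erase.2 ⟨Ne.symm h4, h2⟩), insert_erase h1]
        have hEq' : ((A.erase p.1).erase p.2).erase i = ((B.erase p.1).erase p.2).erase i := hEq
        rw [← hrec A hA1 hA2 hA3 hA4 hA5 hA6, ← hrec B hB1 hB2 hB3 hB4 hB5 hB6, hEq']
    have hP2card : P2.card = (2 * r - 2) * (2 * r - 2) := by
      rw [hP2def, card_product, Nat.card_Icc]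
      congr 1
    have hT2card : T₂.card ≤ (2 * r - 2) * (2 * r - 2) * Nat.choose n (r - 3) := by
      calc T₂.card ≤ (P2.biUnion fprop).card := card_le_card hT2sub
        _ ≤ ∑ p ∈ P2, (fprop p).card := card_biUnion_le
        _ ≤ P2.card • Nat.choose n (r - 3) := sum_le_card_nsmul _ _ _ hbound
        _ = (2 * r - 2) * (2 * r - 2) * Nat.choose n (r - 3) := by
            rw [smul_eq_mul, hP2card]
    -- the arithmetic comparison
    have harith : (2 * r - 2) * (2 * r - 2) * Nat.choose n (r - 3) ≤
        Nat.choose (n - 2 * r - 1) (r - 2) := by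
      set m := n - 2 * r - 1 with hmdef
      have hmn : m + (2 * r + 1) = n := by omega
      have hm2 : 2 * (r - 3) + 2 ≤ m := by omega
      have hA : Nat.choose n (r - 3) ≤ 2 ^ (2 * r + 1) * Nat.choose m (r - 3) := by
        rw [← hmn]
        exact choose_double (r - 3) m hm2 (2 * r + 1)
      have hid : Nat.choose m (r - 2) * (r - 2) = Nat.choose m (r - 3) * (m - (r - 3)) := by
        have h32 : r - 3 + 1 = r - 2 := by omega
        have h := Nat.choose_succ_right_eq m (r - 3)
        rw [h32] at h
        exact h
      have hscal : (2 * r - 2) * (2 * r - 2) * (r - 2) * 2 ^ (2 * r + 1) ≤ m - (r - 3) := by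
        have h1 : (2 * r - 2) * (2 * r - 2) * (r - 2) ≤ 8 * r * r * r := by
          calc (2 * r - 2) * (2 * r - 2) * (r - 2) ≤ (2 * r) * (2 * r) * r :=
                Nat.mul_le_mul (Nat.mul_le_mul (by omega) (by omega)) (by omega)
            _ = 4 * (r * r * r) := by ring
            _ ≤ 8 * (r * r * r) := Nat.mul_le_mul (by norm_num) le_rfl
            _ = 8 * r * r * r := by ring
        have h2 : (8 * r * r * r) * 2 ^ (2 * r + 1) ≤ m - (r - 3) := by
          have he : (8 * r * r * r) * 2 ^ (2 * r + 1) = K := by rw [hKdef]; ring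
          rw [he]
          omega
        calc (2 * r - 2) * (2 * r - 2) * (r - 2) * 2 ^ (2 * r + 1)
            ≤ (8 * r * r * r) * 2 ^ (2 * r + 1) := Nat.mul_le_mul h1 le_rfl
          _ ≤ m - (r - 3) := h2
      have hmain : (2 * r - 2) * (2 * r - 2) * (2 ^ (2 * r + 1) * Nat.choose m (r - 3)) *
          (r - 2) ≤ Nat.choose m (r - 2) * (r - 2) := by
        rw [hid]
        calc (2 * r - 2) * (2 * r - 2) * (2 ^ (2 * r + 1) * Nat.choose m (r - 3)) * (r - 2)
            = ((2 * r - 2) * (2 * r - 2) * (r - 2) * 2 ^ (2 * r + 1)) * Nat.choose m (r - 3) := by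
              ring
          _ ≤ (m - (r - 3)) * Nat.choose m (r - 3) := Nat.mul_le_mul hscal le_rfl
          _ = Nat.choose m (r - 3) * (m - (r - 3)) := by ring
      have hfin := Nat.le_of_mul_le_mul_right hmain (by omega : 0 < r - 2)
      calc (2 * r - 2) * (2 * r - 2) * Nat.choose n (r - 3)
          ≤ (2 * r - 2) * (2 * r - 2) * (2 ^ (2 * r + 1) * Nat.choose m (r - 3)) :=
            Nat.mul_le_mul le_rfl hA
        _ ≤ Nat.choose m (r - 2) := hfin
    have hWge : Nat.choose (n - 2 * r - 1) (r - 2) ≤ W.card := by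
      rw [hWcard]
      exact Nat.choose_le_choose _ hG₂card
    have hT2W : T₂.card ≤ W.card := le_trans hT2card (le_trans harith hWge)
    calc T.card = T₁.card + T₂.card := hsplit.symm
      _ ≤ T₁.card + W.card := by omega
      _ ≤ Nat.choose (n - 2) (r - 2) := hcard1
end
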